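/- arXiv:1504.08252 — 5 statements merged into one kernel-verified Lean document; each statement's English description precedes it below -/
import Mathlib

section
/- For all integers n ≥ 2 and m ≥ 1 there exists a constant δ = δ(n,m) > 0 such that the following holds: for every finite set V and every symmetric n-ary relation E ⊆ V^n such that the partitioned relation E(x₁; x₂,…,xₙ) is m-stable, there exists a subset A ⊆ V with |A| ≥ |V|^δ which is E-homogeneous, i.e., either every n-tuple of pairwise distinct elements of A belongs to E, or no n-tuple of pairwise distinct elements of A belongs to E. -/
set_option linter.unusedSectionVars false

/-- Given `a : V` and an `(n-1)`-tuple `b`, form the `n`-tuple `(a, b₁, …, b_{n-1})`. -/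
def extendTuple {V : Type*} {n : ℕ} (a : V) (b : Fin (n - 1) → V) : Fin n → V :=
  fun t => if h : (t : ℕ) = 0 then a else b ⟨(t : ℕ) - 1, by have := t.isLt; omega⟩

namespace EHStable

attribute [local instance] Classical.propDecidable

variable {V : Type} [DecidableEq V]

/-- invariance of a `k`-ary relation under permutations of coordinates -/
def Sym (k : ℕ) (R : (Fin k → V) → Prop) : Prop :=
  ∀ (σ : Equiv.Perm (Fin k)) (x : Fin k → V), R x → R (x ∘ σ)

lemma Sym.iff {k : ℕ} {R : (Fin k → V) → Prop} (h : Sym k R) (σ : Equiv.Perm (Fin k))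
    (x : Fin k → V) : R (x ∘ σ) ↔ R x := by
  constructor
  · intro hx
    have h2 := h σ⁻¹ _ hx
    have : (x ∘ σ) ∘ (σ⁻¹ : Equiv.Perm (Fin k)) = x := by
      funext t; simp
    rwa [this] at h2
  · exact h σ x

lemma Sym.not {k : ℕ} {R : (Fin k → V) → Prop} (h : Sym k R) :
    Sym k (fun x => ¬ R x) := by
  intro σ x hx hc
  exact hx ((h.iff σ x).mp hc)

/-- all injective tuples from `A` satisfy `R` -/
def HomP (k : ℕ) (R : (Fin k → V) → Prop) (A : Finset V) : Prop :=
  ∀ x : Fin k → V, Function.Injective x → (∀ t, x t ∈ A) → R x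

def HomOn (k : ℕ) (R : (Fin k → V) → Prop) (A : Finset V) : Prop :=
  HomP k R A ∨ HomP k (fun x => ¬ R x) A

/-- an order configuration of height `h` for the `(j+1)`-ary relation `R`, inside `B` -/
def Conf (j : ℕ) (R : (Fin (j+1) → V) → Prop) (h : ℕ) (B : Finset V) : Prop :=
  ∃ (a : Fin h → V) (b : Fin h → Fin j → V),
    (∀ I, a I ∈ B) ∧ (∀ J, Function.Injective (b J) ∧ ∀ t, b J t ∈ B) ∧
    ∀ I J, R (Fin.cons (a I) (b J)) ↔ I ≤ J

lemma conf_mono {j : ℕ} {R : (Fin (j+1) → V) → Prop} {h : ℕ} {B B' : Finset V}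
    (hBB : B ⊆ B') : Conf j R h B → Conf j R h B' := by
  rintro ⟨a, b, ha, hb, hpat⟩
  exact ⟨a, b, fun I => hBB (ha I), fun J => ⟨(hb J).1, fun t => hBB ((hb J).2 t)⟩, hpat⟩

lemma conf_zero {j : ℕ} (R : (Fin (j+1) → V) → Prop) (B : Finset V) : Conf j R 0 B :=
  ⟨Fin.elim0, Fin.elim0, fun I => I.elim0, fun J => J.elim0, fun I => I.elim0⟩

lemma cons_comp_extend {k : ℕ} (a : V) (c : Fin k → V) (σ : Equiv.Perm (Fin k)) :
    Fin.cons a (c ∘ σ) = Fin.cons a c ∘ (Equiv.Perm.decomposeFin.symm (0, σ)) := by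
  funext t
  refine Fin.cases ?_ ?_ t
  · simp
  · intro t'
    simp [Equiv.Perm.decomposeFin_symm_apply_succ]

lemma Sym.cons {k : ℕ} {R : (Fin (k+1) → V) → Prop} (h : Sym (k+1) R) (a : V) :
    Sym k (fun c => R (Fin.cons a c)) := by
  intro σ c hc
  show R (Fin.cons a (c ∘ σ))
  rw [cons_comp_extend]
  exact h _ _ hc

lemma cons_swap {k : ℕ} (x y : V) (c : Fin k → V) :
    Fin.cons x (Fin.cons y c) =
      Fin.cons y (Fin.cons x c) ∘ (Equiv.swap (0 : Fin (k+2)) (Fin.succ 0)) := by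
  funext t
  refine Fin.cases ?_ ?_ t
  · simp [Equiv.swap_apply_left]
  · intro t'
    refine Fin.cases ?_ ?_ t'
    · simp [Equiv.swap_apply_right]
    · intro t''
      have h1 : Equiv.swap (0 : Fin (k+2)) 1 (t''.succ.succ) = t''.succ.succ := by
        apply Equiv.swap_apply_of_ne_of_ne
        · exact Fin.succ_ne_zero _
        · rw [← Fin.succ_zero_eq_one]
          exact fun hc => (Fin.succ_ne_zero t'') ((Fin.succ_inj (a := t''.succ) (b := 0)).mp hc)
      simp only [Fin.succ_zero_eq_one]
      rw [Function.comp_apply, h1]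
      simp

lemma cons_injective {k : ℕ} {a : V} {c : Fin k → V} (hc : Function.Injective c)
    (ha : ∀ t, c t ≠ a) : Function.Injective (Fin.cons a c : Fin (k+1) → V) := by
  intro t t'
  refine Fin.cases ?_ ?_ t <;> refine Fin.cases ?_ ?_ t'
  · intro _; rfl
  · intro u' h
    rw [Fin.cons_zero, Fin.cons_succ] at h
    exact absurd h.symm (ha u')
  · intro u h
    rw [Fin.cons_succ, Fin.cons_zero] at h
    exact absurd h (ha u)
  · intro u' u h
    rw [Fin.cons_succ, Fin.cons_succ] at h
    exact congrArg Fin.succ (hc h)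

lemma tail_injective {k : ℕ} {y : Fin (k+1) → V} (hy : Function.Injective y) :
    Function.Injective (Fin.tail y) := by
  intro t t' h
  exact Fin.succ_injective _ (hy h)

lemma greedy {i : ℕ} {R : (Fin (i+2) → V) → Prop} (hsym : Sym (i+2) R)
    (W : Finset V) (s r : ℕ)
    (hmax : ∀ c : Fin (i+1) → V, Function.Injective c → (∀ t, c t ∈ W) →
      ∀ F : Finset V, F ⊆ W → (∀ x ∈ F, ¬ R (Fin.cons x c)) → F.card < r)
    (hW : s * (s ^ (i+1) * r + 1) ≤ W.card) :
    ∃ A : Finset V, A ⊆ W ∧ A.card = s ∧ HomP (i+2) R A := by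
  classical
  suffices h : ∀ k, k ≤ s → ∃ A U : Finset V, A ⊆ W ∧ U ⊆ W ∧ Disjoint A U ∧ A.card = k ∧
      W.card ≤ U.card + k * (s ^ (i+1) * r + 1) ∧
      (∀ x ∈ U, ∀ c : Fin (i+1) → V, Function.Injective c → (∀ t, c t ∈ A) →
        R (Fin.cons x c)) ∧
      HomP (i+2) R A by
    obtain ⟨A, U, hAW, _, _, hcard, _, _, hhom⟩ := h s le_rfl
    exact ⟨A, hAW, hcard, hhom⟩
  intro k
  induction k with
  | zero =>
    intro _
    refine ⟨∅, W, by simp, le_rfl, by simp, by simp, by simp, ?_, ?_⟩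
    · intro x hx c hc hcA
      exact absurd (hcA 0) (Finset.notMem_empty _)
    · intro x hx hxA
      exact absurd (hxA 0) (Finset.notMem_empty _)
  | succ k ih =>
    intro hk
    obtain ⟨A, U, hAW, hUW, hdisj, hcard, hcount, hinv, hhom⟩ := ih (Nat.le_of_succ_le hk)
    set X := s ^ (i+1) * r + 1 with hX
    have hXpos : 0 < X := Nat.succ_pos _
    have hUne : U.Nonempty := by
      rw [← Finset.card_pos]
      by_contra hc
      push_neg at hc
      have h1 : (k+1) * X ≤ s * X := Nat.mul_le_mul_right _ hk
      have h3 : (k+1) * X = k * X + X := by ring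
      omega
    obtain ⟨u, hu⟩ := hUne
    have huW : u ∈ W := hUW hu
    have huA : u ∉ A := fun hc => (Finset.disjoint_left.mp hdisj hc) hu
    set A' := insert u A with hA'
    have hA'W : A' ⊆ W := by rw [hA']; exact Finset.insert_subset huW hAW
    have hA'card : A'.card = k + 1 := by
      rw [hA', Finset.card_insert_of_notMem huA, hcard]
    set T := (Fintype.piFinset (fun _ : Fin (i+1) => A')).filter
        (fun c => Function.Injective c) with hT
    set U' := (U.erase u).filter
        (fun x => ∀ c : Fin (i+1) → V, Function.Injective c → (∀ t, c t ∈ A') →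
          R (Fin.cons x c)) with hU'
    have hTcard : T.card ≤ s ^ (i+1) := by
      calc T.card ≤ (Fintype.piFinset (fun _ : Fin (i+1) => A')).card :=
            Finset.card_filter_le _ _
        _ = A'.card ^ (i+1) := by
            rw [Fintype.card_piFinset]
            simp
        _ ≤ s ^ (i+1) := Nat.pow_le_pow_left (by omega) _
    have hsub : U.erase u ⊆
        U' ∪ T.biUnion (fun c => W.filter fun x => ¬ R (Fin.cons x c)) := by
      intro x hx
      by_cases hx' : x ∈ U'
      · exact Finset.mem_union_left _ hx'
      · have hxU : x ∈ U := Finset.mem_of_mem_erase hx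
        rw [hU', Finset.mem_filter] at hx'
        push_neg at hx'
        obtain ⟨c, hci, hcm, hcr⟩ := hx' hx
        refine Finset.mem_union_right _ (Finset.mem_biUnion.mpr ⟨c, ?_, ?_⟩)
        · rw [hT, Finset.mem_filter]; exact ⟨Fintype.mem_piFinset.mpr hcm, hci⟩
        · exact Finset.mem_filter.mpr ⟨hUW hxU, hcr⟩
    have hbound : (U.erase u).card ≤ U'.card + s ^ (i+1) * r := by
      calc (U.erase u).card
          ≤ (U' ∪ T.biUnion (fun c => W.filter fun x => ¬ R (Fin.cons x c))).card :=
            Finset.card_le_card hsub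
        _ ≤ U'.card + (T.biUnion (fun c => W.filter fun x => ¬ R (Fin.cons x c))).card :=
            Finset.card_union_le _ _
        _ ≤ U'.card + ∑ c ∈ T, (W.filter fun x => ¬ R (Fin.cons x c)).card := by
            have := Finset.card_biUnion_le
              (s := T) (t := fun c => W.filter fun x => ¬ R (Fin.cons x c))
            omega
        _ ≤ U'.card + T.card * r := by
            have hsum : ∑ c ∈ T, (W.filter fun x => ¬ R (Fin.cons x c)).card ≤ T.card * r := by
              have := Finset.sum_le_card_nsmul T
                (fun c => (W.filter fun x => ¬ R (Fin.cons x c)).card) r ?_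
              · simpa using this
              · intro c hc
                rw [hT, Finset.mem_filter] at hc
                refine le_of_lt (hmax c hc.2 (fun t => hA'W (Fintype.mem_piFinset.mp hc.1 t))
                  _ (Finset.filter_subset _ _) ?_)
                intro x hx
                exact (Finset.mem_filter.mp hx).2
            omega
        _ ≤ U'.card + s ^ (i+1) * r := by
            have := Nat.mul_le_mul_right r hTcard
            omega
    have hUerase : (U.erase u).card + 1 = U.card := Finset.card_erase_add_one hu
    have hcount' : W.card ≤ U'.card + (k+1) * X := by
      have h3 : (k+1) * X = k * X + s ^ (i+1) * r + 1 := by rw [hX]; ring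
      omega
    have hU'U : U' ⊆ U := by
      rw [hU']
      exact (Finset.filter_subset _ _).trans (Finset.erase_subset _ _)
    have huU' : u ∉ U' := by
      rw [hU']
      intro hc
      exact (Finset.notMem_erase u U) ((Finset.filter_subset _ _) hc)
    have hdisj' : Disjoint A' U' := by
      rw [hA', Finset.disjoint_insert_left]
      exact ⟨huU', Finset.disjoint_of_subset_right hU'U hdisj⟩
    have hhom' : HomP (i+2) R A' := by
      intro x hxi hxm
      by_cases hall : ∀ t, x t ∈ A
      · exact hhom x hxi hall
      · push_neg at hall
        obtain ⟨t₀, ht₀⟩ := hall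
        have hxt₀ : x t₀ = u := by
          have h1 := hxm t₀
          rw [hA', Finset.mem_insert] at h1
          tauto
        set σ := Equiv.swap (0 : Fin (i+2)) t₀ with hσ
        set y := x ∘ σ with hy
        have hyi : Function.Injective y := hxi.comp (Equiv.injective σ)
        have hy0 : y 0 = u := by
          rw [hy]; simp only [Function.comp_apply, hσ, Equiv.swap_apply_left]; exact hxt₀
        have hctail : ∀ t : Fin (i+1), Fin.tail y t ∈ A := by
          intro t
          have h1 : y t.succ ∈ A' := hxm _
          have h2 : y t.succ ≠ u := by
            rw [← hy0]; exact fun hc => (Fin.succ_ne_zero t) (hyi hc)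
          rw [hA', Finset.mem_insert] at h1
          unfold Fin.tail
          tauto
        have hR : R y := by
          have h1 := hinv u hu (Fin.tail y) (tail_injective hyi) hctail
          rwa [← hy0, Fin.cons_self_tail] at h1
        have h2 : R (y ∘ σ) := hsym σ y hR
        have hyx : y ∘ σ = x := by
          funext t; rw [hy]
          simp only [Function.comp_apply, hσ, Equiv.swap_apply_self]
        rwa [hyx] at h2
    refine ⟨A', U', hA'W, hU'U.trans hUW, hdisj', hA'card, hcount', ?_, hhom'⟩
    intro x hx c hci hcm
    exact (Finset.mem_filter.mp hx).2 c hci hcm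

def DDf (g : ℕ → ℕ → ℕ) (c : ℕ) : ℕ → ℕ → ℕ → ℕ
  | 0, _, _ => 1
  | f+1, p, q =>
    match p, q with
    | p'+2, q'+2 =>
        (max (DDf g c f (p'+1) (q'+2)) (DDf g c f (p'+2) (q'+1)) + c) * g (p'+2) (q'+2) + 1
    | _, _ => 1

def DD : ℕ → ℕ → ℕ → ℕ → ℕ
  | 0, _, _, _ => 3
  | i+1, fuel, p, q => DDf (fun p q => DD i (p+q) p q) (2*i + 12) fuel p q

example (fuel p q : ℕ) : DD 0 fuel p q = 3 := rfl
example (f i q : ℕ) : DD (i+1) (f+1) 0 q = 1 := rfl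
example (f i q : ℕ) : DD (i+1) (f+1) 1 q = 1 := rfl
example (f i p' : ℕ) : DD (i+1) (f+1) (p'+2) 0 = 1 := rfl
example (f i p' : ℕ) : DD (i+1) (f+1) (p'+2) 1 = 1 := rfl
example (i p q : ℕ) : DD (i+1) 0 p q = 1 := rfl
example (f i p' q' : ℕ) : DD (i+1) (f+1) (p'+2) (q'+2) =
    (max (DD (i+1) f (p'+1) (q'+2)) (DD (i+1) f (p'+2) (q'+1)) + (2*i+12)) *
      DD i ((p'+2)+(q'+2)) (p'+2) (q'+2) + 1 := rfl

lemma conf_lift {i : ℕ} {S : (Fin (i+2) → V) → Prop} (hS : Sym (i+2) S) {h : ℕ}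
    {B : Finset V} {a : V} (haB : a ∈ B) :
    Conf i (fun c => S (Fin.cons a c)) h (B.erase a) → Conf (i+1) S h B := by
  rintro ⟨u, c, hu, hc, hpat⟩
  refine ⟨u, fun J => Fin.cons a (c J), fun I => Finset.mem_of_mem_erase (hu I),
    fun J => ⟨cons_injective (hc J).1 (fun t => Finset.ne_of_mem_erase ((hc J).2 t)), ?_⟩, ?_⟩
  · intro t
    refine Fin.cases ?_ ?_ t
    · simpa using haB
    · intro t'
      simpa using Finset.mem_of_mem_erase ((hc J).2 t')
  · intro I J
    rw [cons_swap (u I) a (c J), hS.iff]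
    exact hpat I J

lemma conf_prepend {i : ℕ} {S : (Fin (i+2) → V) → Prop} {h : ℕ} {B W₂ : Finset V}
    {a₀ : V} {c₀ : Fin (i+1) → V} (hW₂B : W₂ ⊆ B) (ha₀ : a₀ ∈ B)
    (hc₀i : Function.Injective c₀) (hc₀m : ∀ t, c₀ t ∈ B)
    (htop : S (Fin.cons a₀ c₀))
    (hrow : ∀ d : Fin (i+1) → V, Function.Injective d → (∀ t, d t ∈ W₂) → S (Fin.cons a₀ d))
    (hcol : ∀ v ∈ W₂, ¬ S (Fin.cons v c₀)) :
    Conf (i+1) S h W₂ → Conf (i+1) S (h+1) B := by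
  rintro ⟨u, d, hu, hd, hpat⟩
  refine ⟨Fin.cons a₀ u, Fin.cons c₀ d, ?_, ?_, ?_⟩
  · intro I
    refine Fin.cases ?_ ?_ I
    · simpa using ha₀
    · intro I'; simpa using hW₂B (hu I')
  · intro J
    refine Fin.cases ?_ ?_ J
    · simpa using ⟨hc₀i, hc₀m⟩
    · intro J'
      constructor
      · simpa using (hd J').1
      · simpa using fun t => hW₂B ((hd J').2 t)
  · intro I J
    refine Fin.cases ?_ ?_ I
    · refine Fin.cases ?_ ?_ J
      · simp only [Fin.cons_zero]
        exact iff_of_true htop (le_refl 0)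
      · intro J'
        simp only [Fin.cons_zero, Fin.cons_succ]
        exact iff_of_true (hrow (d J') (hd J').1 (hd J').2) (Fin.zero_le _)
    · intro I'
      refine Fin.cases ?_ ?_ J
      · simp only [Fin.cons_succ, Fin.cons_zero]
        refine iff_of_false (hcol (u I') (hu I')) ?_
        simp [Fin.le_def]
      · intro J'
        simp only [Fin.cons_succ]
        rw [hpat I' J']
        exact (Fin.succ_le_succ_iff).symm

theorem ML (jj : ℕ) : ∀ (fuel p q : ℕ), p + q ≤ fuel →
    ∀ (R : (Fin (jj+1) → V) → Prop), Sym (jj+1) R →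
    ∀ (s : ℕ), 2 ≤ s → ∀ (B : Finset V), s ^ DD jj fuel p q ≤ B.card →
    (∃ A : Finset V, A ⊆ B ∧ s ≤ A.card ∧ HomOn (jj+1) R A) ∨
      Conf jj R p B ∨ Conf jj (fun x => ¬ R x) q B := by
  induction jj with
  | zero =>
    intro fuel p q hpq R hR s hs B hB
    left
    have hDD : DD 0 fuel p q = 3 := rfl
    rw [hDD] at hB
    set P := B.filter (fun v => R (fun _ => v)) with hP
    have hQcard : (B \ P).card = B.card - P.card :=
      Finset.card_sdiff_of_subset (Finset.filter_subset _ _)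
    have hPB : P.card ≤ B.card := Finset.card_le_card (Finset.filter_subset _ _)
    have h2s : 2 * s ≤ B.card := by
      have h2 : 2 ≤ s ^ 2 := le_trans hs (Nat.le_self_pow (by omega) s)
      have h1 : 2 * s ≤ s ^ 3 := by
        calc 2 * s ≤ s ^ 2 * s := Nat.mul_le_mul_right _ h2
          _ = s ^ 3 := by ring
      omega
    have hsingle : ∀ x : Fin 1 → V, x = fun _ => x 0 := by
      intro x; funext u; rw [Fin.eq_zero u]
    by_cases hcase : s ≤ P.card
    · refine ⟨P, Finset.filter_subset _ _, hcase, Or.inl ?_⟩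
      intro x hxi hxm
      have h1 := (Finset.mem_filter.mp (hxm 0)).2
      rw [hsingle x]; exact h1
    · refine ⟨B \ P, Finset.sdiff_subset, by omega, Or.inr ?_⟩
      intro x hxi hxm
      have h1 := Finset.mem_sdiff.mp (hxm 0)
      rw [hsingle x]
      intro hc
      exact h1.2 (Finset.mem_filter.mpr ⟨h1.1, hc⟩)
  | succ i ihj =>
    intro fuel
    induction fuel with
    | zero =>
      intro p q hpq R hR s hs B hB
      have hp : p = 0 := by omega
      subst hp
      exact Or.inr (Or.inl (conf_zero _ _))
    | succ f ihf =>
      intro p q hpq R hR s hs B hB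
      rcases p with _ | _ | p'
      · exact Or.inr (Or.inl (conf_zero _ _))
      · -- p = 1
        by_cases hex : ∃ x : Fin (i+2) → V, Function.Injective x ∧ (∀ t, x t ∈ B) ∧ R x
        · obtain ⟨x, hxi, hxm, hxR⟩ := hex
          refine Or.inr (Or.inl ⟨fun _ => x 0, fun _ => Fin.tail x, fun I => hxm 0,
            fun J => ⟨tail_injective hxi, fun t => hxm _⟩, ?_⟩)
          intro I J
          rw [Fin.cons_self_tail]
          have hIJ : I ≤ J := by omega
          exact iff_of_true hxR hIJ
        · push_neg at hex
          refine Or.inl ⟨B, subset_rfl, ?_, Or.inr ?_⟩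
          · have hv : DD (i+1) (f+1) 1 q = 1 := rfl
            rw [hv, pow_one] at hB; exact hB
          · intro x hxi hxm; exact hex x hxi hxm
      rcases q with _ | _ | q'
      · exact Or.inr (Or.inr (conf_zero _ _))
      · -- q = 1
        by_cases hex : ∃ x : Fin (i+2) → V, Function.Injective x ∧ (∀ t, x t ∈ B) ∧ ¬ R x
        · obtain ⟨x, hxi, hxm, hxR⟩ := hex
          refine Or.inr (Or.inr ⟨fun _ => x 0, fun _ => Fin.tail x, fun I => hxm 0,
            fun J => ⟨tail_injective hxi, fun t => hxm _⟩, ?_⟩)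
          intro I J
          rw [Fin.cons_self_tail]
          have hIJ : I ≤ J := by omega
          exact iff_of_true hxR hIJ
        · push_neg at hex
          refine Or.inl ⟨B, subset_rfl, ?_, Or.inl ?_⟩
          · have hv : DD (i+1) (f+1) (p'+2) 1 = 1 := rfl
            rw [hv, pow_one] at hB; exact hB
          · intro x hxi hxm; exact hex x hxi hxm
      -- main step : p = p'+2, q = q'+2
      have hs1 : 1 ≤ s := by omega
      set Dmax := max (DD (i+1) f (p'+1) (q'+2)) (DD (i+1) f (p'+2) (q'+1)) with hDmax
      set Ee := Dmax + (2*i + 12) with hEe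
      set D0 := DD i ((p'+2)+(q'+2)) (p'+2) (q'+2) with hD0
      have hDDval : DD (i+1) (f+1) (p'+2) (q'+2) = Ee * D0 + 1 := rfl
      rw [hDDval] at hB
      set t := s ^ Ee with ht
      have ht2 : 2 ≤ t := by
        calc (2:ℕ) = 2^1 := rfl
          _ ≤ s^1 := by rw [pow_one, pow_one]; exact hs
          _ ≤ s ^ Ee := Nat.pow_le_pow_right hs1 (by omega)
      have hBne : B.Nonempty := by
        rw [← Finset.card_pos]
        have h1 : 1 ≤ s ^ (Ee * D0 + 1) := Nat.one_le_pow _ _ (by omega)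
        omega
      obtain ⟨a, haB⟩ := hBne
      have hRa : Sym (i+1) (fun c => R (Fin.cons a c)) := hR.cons a
      have herase : t ^ D0 ≤ (B.erase a).card := by
        rw [Finset.card_erase_of_mem haB, ht, ← pow_mul]
        have h1 : s ^ (Ee*D0) * 2 ≤ s ^ (Ee*D0) * s := Nat.mul_le_mul_left _ hs
        have h2 : s ^ (Ee*D0) * s = s ^ (Ee*D0+1) := (pow_succ s _).symm
        have h3 : 1 ≤ s ^ (Ee*D0) := Nat.one_le_pow _ _ (by omega)
        omega
      have hcall := ihj ((p'+2)+(q'+2)) (p'+2) (q'+2) le_rfl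
        (fun c => R (Fin.cons a c)) hRa t ht2 (B.erase a) herase
      have hthr0 : s * (s ^ (i+1) * s ^ Dmax + 1) ≤ t := by
        have e1 : s ^ (i+1) * s ^ Dmax = s ^ (Dmax + (i+1)) := by
          rw [pow_add]; ring
        have e2 : 1 ≤ s ^ (Dmax + (i+1)) := Nat.one_le_pow _ _ (by omega)
        have e3 : s ^ (Dmax+(i+1)) + 1 ≤ 2 * s ^ (Dmax+(i+1)) := by omega
        calc s * (s ^ (i+1) * s ^ Dmax + 1) ≤ s * (2 * s ^ (Dmax+(i+1))) := by
              rw [e1]; exact Nat.mul_le_mul_left _ e3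
          _ ≤ s * (s * s ^ (Dmax+(i+1))) :=
              Nat.mul_le_mul_left _ (Nat.mul_le_mul_right _ hs)
          _ = s ^ (Dmax+(i+1)+1+1) := by rw [← pow_succ', ← pow_succ']
          _ ≤ s ^ Ee := Nat.pow_le_pow_right hs1 (by omega)
      rcases hcall with ⟨W₁, hW₁sub, hW₁card, hhom⟩ | hconf | hconf
      · -- got a homogeneous set for the link relation
        have hW₁B : W₁ ⊆ B := hW₁sub.trans (Finset.erase_subset _ _)
        rcases hhom with pos | neg
        · -- Case P : a is positively complete to W₁
          by_cases hex : ∃ c : Fin (i+1) → V, Function.Injective c ∧ (∀ u, c u ∈ W₁) ∧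
              s ^ Dmax ≤ (W₁.filter fun x => ¬ R (Fin.cons x c)).card
          · obtain ⟨c, hci, hcm, hcc⟩ := hex
            set W₂ := W₁.filter (fun x => ¬ R (Fin.cons x c)) with hW₂
            have hW₂sub : W₂ ⊆ W₁ := Finset.filter_subset _ _
            have hW₂B : W₂ ⊆ B := hW₂sub.trans hW₁B
            have hcallcard : s ^ DD (i+1) f (p'+1) (q'+2) ≤ W₂.card :=
              le_trans (Nat.pow_le_pow_right hs1 (le_max_left _ _)) hcc
            rcases ihf (p'+1) (q'+2) (by omega) R hR s hs W₂ hcallcard with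
              hA | hconf2 | hconf2
            · obtain ⟨A, hA1, hA2, hA3⟩ := hA
              exact Or.inl ⟨A, hA1.trans hW₂B, hA2, hA3⟩
            · refine Or.inr (Or.inl (conf_prepend hW₂B haB hci
                (fun u => hW₁B (hcm u)) (pos c hci hcm) ?_ ?_ hconf2))
              · intro d hdi hdm
                exact pos d hdi (fun u => hW₂sub (hdm u))
              · intro v hv
                exact (Finset.mem_filter.mp hv).2
            · exact Or.inr (Or.inr (conf_mono hW₂B hconf2))
          · push_neg at hex
            have hmax : ∀ c : Fin (i+1) → V, Function.Injective c → (∀ u, c u ∈ W₁) →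
                ∀ F : Finset V, F ⊆ W₁ → (∀ x ∈ F, ¬ R (Fin.cons x c)) → F.card < s ^ Dmax := by
              intro c h1 h2 F hF hFprop
              have h3 := hex c h1 h2
              have h4 : F.card ≤ (W₁.filter fun x => ¬ R (Fin.cons x c)).card := by
                apply Finset.card_le_card
                intro x hx
                exact Finset.mem_filter.mpr ⟨hF hx, hFprop x hx⟩
              omega
            obtain ⟨A, hA1, hA2, hA3⟩ := greedy hR W₁ s (s ^ Dmax) hmax
              (le_trans hthr0 hW₁card)
            exact Or.inl ⟨A, hA1.trans hW₁B, le_of_eq hA2.symm, Or.inl hA3⟩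
        · -- Case N : a is negatively complete to W₁
          by_cases hex : ∃ c : Fin (i+1) → V, Function.Injective c ∧ (∀ u, c u ∈ W₁) ∧
              s ^ Dmax ≤ (W₁.filter fun x => R (Fin.cons x c)).card
          · obtain ⟨c, hci, hcm, hcc⟩ := hex
            set W₂ := W₁.filter (fun x => R (Fin.cons x c)) with hW₂
            have hW₂sub : W₂ ⊆ W₁ := Finset.filter_subset _ _
            have hW₂B : W₂ ⊆ B := hW₂sub.trans hW₁B
            have hcallcard : s ^ DD (i+1) f (p'+2) (q'+1) ≤ W₂.card :=
              le_trans (Nat.pow_le_pow_right hs1 (le_max_right _ _)) hcc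
            rcases ihf (p'+2) (q'+1) (by omega) R hR s hs W₂ hcallcard with
              hA | hconf2 | hconf2
            · obtain ⟨A, hA1, hA2, hA3⟩ := hA
              exact Or.inl ⟨A, hA1.trans hW₂B, hA2, hA3⟩
            · exact Or.inr (Or.inl (conf_mono hW₂B hconf2))
            · refine Or.inr (Or.inr (conf_prepend (S := fun x => ¬ R x) hW₂B haB hci
                (fun u => hW₁B (hcm u)) (neg c hci hcm) ?_ ?_ hconf2))
              · intro d hdi hdm
                exact neg d hdi (fun u => hW₂sub (hdm u))
              · intro v hv hc
                exact hc (Finset.mem_filter.mp hv).2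
          · push_neg at hex
            have hmax : ∀ c : Fin (i+1) → V, Function.Injective c → (∀ u, c u ∈ W₁) →
                ∀ F : Finset V, F ⊆ W₁ → (∀ x ∈ F, ¬ ¬ R (Fin.cons x c)) → F.card < s ^ Dmax := by
              intro c h1 h2 F hF hFprop
              have h3 := hex c h1 h2
              have h4 : F.card ≤ (W₁.filter fun x => R (Fin.cons x c)).card := by
                apply Finset.card_le_card
                intro x hx
                exact Finset.mem_filter.mpr ⟨hF hx, not_not.mp (hFprop x hx)⟩
              omega
            obtain ⟨A, hA1, hA2, hA3⟩ := greedy hR.not W₁ s (s ^ Dmax) hmax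
              (le_trans hthr0 hW₁card)
            exact Or.inl ⟨A, hA1.trans hW₁B, le_of_eq hA2.symm, Or.inr hA3⟩
      · exact Or.inr (Or.inl (conf_lift hR haB hconf))
      · exact Or.inr (Or.inr (conf_lift hR.not haB hconf))

lemma extendTuple_eq_cons {j : ℕ} (a : V) (b : Fin (j+1) → V) :
    extendTuple (n := j+2) a b = Fin.cons a b := by
  funext t
  refine Fin.cases ?_ ?_ t
  · simp [extendTuple]
  · intro t'
    have h1 : ((Fin.succ t' : Fin (j+2)) : ℕ) = t'.val + 1 := rfl
    simp [extendTuple, h1]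

lemma conf_contra1 {j m : ℕ} {E : Set (Fin (j+2) → V)} [Fintype V]
    (hstab : ¬ ∃ (a : Fin m → V) (b : Fin m → Fin (j+1) → V),
        ∀ i k, extendTuple (a i) (b k) ∈ E ↔ i ≤ k) :
    ¬ Conf (V := V) (j+1) (fun x => x ∈ E) m Finset.univ := by
  rintro ⟨a, b, -, -, hpat⟩
  refine hstab ⟨a, fun k => b k, fun i k => ?_⟩
  rw [extendTuple_eq_cons]
  exact hpat i k

lemma conf_contra2 {j m : ℕ} {E : Set (Fin (j+2) → V)} [Fintype V]
    (hstab : ¬ ∃ (a : Fin m → V) (b : Fin m → Fin (j+1) → V),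
        ∀ i k, extendTuple (a i) (b k) ∈ E ↔ i ≤ k) :
    ¬ Conf (V := V) (j+1) (fun x => ¬ (x ∈ E)) (m+1) Finset.univ := by
  rintro ⟨a, b, -, -, hpat⟩
  refine hstab ⟨fun i => a (Fin.rev (Fin.castSucc i)),
    fun k => b (Fin.rev (Fin.succ k)), fun i k => ?_⟩
  rw [extendTuple_eq_cons]
  have h1 := hpat (Fin.rev (Fin.castSucc i)) (Fin.rev (Fin.succ k))
  have h2 : (Fin.cons (a (Fin.rev (Fin.castSucc i))) (b (Fin.rev (Fin.succ k)))
      : Fin (j+2) → V) ∈ E ↔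
      ¬ (Fin.rev (Fin.castSucc i) ≤ Fin.rev (Fin.succ k)) := by
    rw [← h1, not_not]
  rw [h2, not_le, Fin.rev_lt_rev]
  exact Fin.castSucc_lt_succ_iff

end EHStable

/-- **Erdős–Hajnal for stable hypergraphs (finitary version).**
For all integers `n ≥ 2` and `m ≥ 1` there is a constant `δ = δ(n, m) > 0` such that
for every finite set `V` and every symmetric `n`-ary relation `E ⊆ V^n` whose
partitioned relation `E(x₁; x₂, …, xₙ)` is `m`-stable, there is an `E`-homogeneous
subset `A ⊆ V` with `|A| ≥ |V| ^ δ`. -/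
theorem erdos_hajnal_stable_hypergraph (n m : ℕ) (hn : 2 ≤ n) (hm : 1 ≤ m) :
    ∃ δ : ℝ, 0 < δ ∧
      ∀ (V : Type) [Fintype V] (E : Set (Fin n → V)),
        (∀ (σ : Equiv.Perm (Fin n)) (x : Fin n → V), x ∈ E → x ∘ σ ∈ E) →
        (¬ ∃ (a : Fin m → V) (b : Fin m → Fin (n - 1) → V),
            ∀ i j, extendTuple (a i) (b j) ∈ E ↔ i ≤ j) →
        ∃ A : Set V,
          (Fintype.card V : ℝ) ^ δ ≤ (A.ncard : ℝ) ∧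
          ((∀ x : Fin n → V, (∀ i, x i ∈ A) → Function.Injective x → x ∈ E) ∨
           (∀ x : Fin n → V, (∀ i, x i ∈ A) → Function.Injective x → x ∉ E)) := by
  classical
  obtain ⟨j, rfl⟩ : ∃ j, n = j + 2 := ⟨n - 2, by omega⟩
  set Dn : ℕ := EHStable.DD (j+1) (2*m+1) m (m+1) + 1 with hDn
  have hDnpos : 0 < Dn := Nat.succ_pos _
  have hDnR : (0:ℝ) < (Dn:ℝ) := by exact_mod_cast hDnpos
  set δ : ℝ := 1 / (2 * (Dn:ℝ)) with hδ
  have hδpos : 0 < δ := by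
    rw [hδ]; exact div_pos one_pos (by linarith)
  refine ⟨δ, hδpos, ?_⟩
  intro V _ E hsym hstab
  letI : DecidableEq V := Classical.decEq V
  set N := Fintype.card V with hN
  set R : (Fin (j+2) → V) → Prop := fun x => x ∈ E with hRdef
  have hRsym : EHStable.Sym (j+2) R := fun σ x hx => hsym σ x hx
  -- square of N^δ equals N^(1/Dn)
  set T : ℝ := (N:ℝ) ^ ((Dn:ℝ))⁻¹ with hT
  have hTnn : 0 ≤ T := Real.rpow_nonneg (Nat.cast_nonneg N) _
  have hδnn : 0 ≤ (N:ℝ) ^ δ := Real.rpow_nonneg (Nat.cast_nonneg N) _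
  have hsq : ((N:ℝ) ^ δ) ^ 2 = T := by
    rw [hT, hδ, ← Real.rpow_natCast ((N:ℝ) ^ (1 / (2 * (Dn:ℝ)))) 2,
      ← Real.rpow_mul (Nat.cast_nonneg N)]
    congr 1
    push_cast
    field_simp
  -- helper : homogeneity of a pair
  have hpair : ∀ u v : V, u ≠ v →
      ((∀ x : Fin (j+2) → V, (∀ i, x i ∈ ({u,v} : Set V)) → Function.Injective x → x ∈ E) ∨
       (∀ x : Fin (j+2) → V, (∀ i, x i ∈ ({u,v} : Set V)) → Function.Injective x → x ∉ E)) := by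
    intro u v huv
    rcases j with _ | j'
    · -- n = 2
      set w : Fin 2 → V := fun t => if t = 0 then u else v with hw
      have hdet : ∀ x : Fin 2 → V, (∀ i, x i ∈ ({u,v} : Set V)) → Function.Injective x →
          (x = w ∨ x = w ∘ (Equiv.swap (0:Fin 2) 1)) := by
        intro x hxm hxi
        have h0 := hxm 0
        have h1 := hxm 1
        simp only [Set.mem_insert_iff, Set.mem_singleton_iff] at h0 h1
        have hne : x 0 ≠ x 1 := fun hc => absurd (hxi hc) (by decide)
        rcases h0 with h0 | h0 <;> rcases h1 with h1 | h1
        · exact absurd (h0.trans h1.symm) hne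
        · left; funext t; fin_cases t <;> simp [hw, h0, h1]
        · right; funext t; fin_cases t <;>
            simp [hw, h0, h1, Equiv.swap_apply_left, Equiv.swap_apply_right]
        · exact absurd (h0.trans h1.symm) hne
      have hswapw : ∀ x : Fin 2 → V, x = w ∘ (Equiv.swap (0:Fin 2) 1) →
          x ∘ (Equiv.swap (0:Fin 2) 1) = w := by
        intro x hx
        rw [hx]
        funext t
        simp [Equiv.swap_apply_self]
      by_cases hwE : w ∈ E
      · left
        intro x hxm hxi
        rcases hdet x hxm hxi with h | h
        · rw [h]; exact hwE
        · rw [h]; exact hsym _ w hwE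
      · right
        intro x hxm hxi hxE
        rcases hdet x hxm hxi with h | h
        · rw [h] at hxE; exact hwE hxE
        · have h2 := hsym (Equiv.swap (0:Fin 2) 1) x hxE
          rw [hswapw x h] at h2
          exact hwE h2
    · -- n ≥ 3 : no injective tuple inside a pair
      left
      intro x hxm hxi
      exfalso
      have i0 : Fin (j'+3) := ⟨0, by omega⟩
      set a0 : Fin (j'+3) := ⟨0, by omega⟩ with ha0
      set a1 : Fin (j'+3) := ⟨1, by omega⟩ with ha1
      set a2 : Fin (j'+3) := ⟨2, by omega⟩ with ha2
      have h0 := hxm a0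
      have h1 := hxm a1
      have h2 := hxm a2
      simp only [Set.mem_insert_iff, Set.mem_singleton_iff] at h0 h1 h2
      have e01 : x a0 ≠ x a1 := fun hc => by
        have := hxi hc; rw [ha0, ha1] at this; simp [Fin.ext_iff] at this
      have e02 : x a0 ≠ x a2 := fun hc => by
        have := hxi hc; rw [ha0, ha2] at this; simp [Fin.ext_iff] at this
      have e12 : x a1 ≠ x a2 := fun hc => by
        have := hxi hc; rw [ha1, ha2] at this; simp [Fin.ext_iff] at this
      rcases h0 with h0 | h0 <;> rcases h1 with h1 | h1 <;> rcases h2 with h2 | h2 <;>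
        first
          | exact e01 (h0.trans h1.symm)
          | exact e02 (h0.trans h2.symm)
          | exact e12 (h1.trans h2.symm)
  set s : ℕ := ⌊T⌋₊ with hs
  by_cases hs2 : 2 ≤ s
  · -- main case : apply ML
    have hsD : s ^ Dn ≤ N := by
      have h1 : (s:ℝ) ≤ T := Nat.floor_le hTnn
      have h2 : ((s:ℝ)) ^ (Dn:ℕ) ≤ T ^ (Dn:ℕ) := pow_le_pow_left₀ (by positivity) h1 _
      have h3 : T ^ (Dn:ℕ) = (N:ℝ) := by
        rw [hT, ← Real.rpow_natCast ((N:ℝ) ^ ((Dn:ℝ))⁻¹) Dn,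
          ← Real.rpow_mul (Nat.cast_nonneg N), inv_mul_cancel₀ hDnR.ne', Real.rpow_one]
      rw [h3] at h2
      exact_mod_cast h2
    have hcard : s ^ EHStable.DD (j+1) (2*m+1) m (m+1) ≤ (Finset.univ : Finset V).card := by
      rw [Finset.card_univ, ← hN]
      calc s ^ EHStable.DD (j+1) (2*m+1) m (m+1) ≤ s ^ Dn :=
            Nat.pow_le_pow_right (by omega) (by omega)
        _ ≤ N := hsD
    have hml := EHStable.ML (j+1) (2*m+1) m (m+1) (by omega) R hRsym s hs2
      Finset.univ hcard
    rcases hml with ⟨A, -, hAcard, hAhom⟩ | hconf | hconf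
    · have hδs : (N:ℝ) ^ δ ≤ (s:ℝ) := by
        have hTlt : T < (s:ℝ) + 1 := Nat.lt_floor_add_one T
        have hss : (s:ℝ) + 1 ≤ (s:ℝ) ^ 2 := by
          have : (s:ℕ) + 1 ≤ s ^ 2 := by nlinarith
          exact_mod_cast this
        have h4 : ((N:ℝ) ^ δ) ^ 2 ≤ (s:ℝ) ^ 2 := by
          rw [hsq]; linarith
        calc (N:ℝ) ^ δ = Real.sqrt (((N:ℝ) ^ δ) ^ 2) := (Real.sqrt_sq hδnn).symm
          _ ≤ Real.sqrt ((s:ℝ) ^ 2) := Real.sqrt_le_sqrt h4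
          _ = (s:ℝ) := Real.sqrt_sq (by positivity)
      refine ⟨(A : Set V), ?_, ?_⟩
      · rw [Set.ncard_coe_finset]
        calc (N:ℝ) ^ δ ≤ (s:ℝ) := hδs
          _ ≤ (A.card : ℝ) := by exact_mod_cast hAcard
      · rcases hAhom with hpos | hneg
        · exact Or.inl (fun x hm hi => hpos x hi (fun t => hm t))
        · exact Or.inr (fun x hm hi => hneg x hi (fun t => hm t))
    · exact absurd hconf (EHStable.conf_contra1 hstab)
    · exact absurd hconf (EHStable.conf_contra2 hstab)
  · -- small case
    push_neg at hs2
    have hTlt : T < 2 := by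
      by_contra hcon
      push_neg at hcon
      have : 2 ≤ s := by
        rw [hs]
        exact Nat.le_floor (by exact_mod_cast hcon)
      omega
    have hδ2 : (N:ℝ) ^ δ ≤ 2 := by
      have h4 : ((N:ℝ) ^ δ) ^ 2 ≤ (2:ℝ) ^ 2 := by
        rw [hsq]; nlinarith
      calc (N:ℝ) ^ δ = Real.sqrt (((N:ℝ) ^ δ) ^ 2) := (Real.sqrt_sq hδnn).symm
        _ ≤ Real.sqrt ((2:ℝ) ^ 2) := Real.sqrt_le_sqrt h4
        _ = 2 := Real.sqrt_sq (by norm_num)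
    rcases Nat.lt_or_ge N 1 with hN0 | hN1
    · -- N = 0
      have hNe : N = 0 := by omega
      refine ⟨∅, ?_, Or.inl ?_⟩
      · rw [hNe]
        simp [Real.zero_rpow hδpos.ne']
      · intro x hm hi
        exfalso
        have hemp : IsEmpty V := Fintype.card_eq_zero_iff.mp hNe
        exact hemp.elim (x 0)
    rcases Nat.lt_or_ge N 2 with hN1' | hN2
    · -- N = 1
      have hNe : N = 1 := by omega
      refine ⟨Set.univ, ?_, Or.inl ?_⟩
      · rw [Set.ncard_univ, Nat.card_eq_fintype_card, ← hN, hNe]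
        simp [Real.one_rpow]
      · intro x hm hi
        exfalso
        have hc1 : Fintype.card V ≤ 1 := by rw [← hN]; omega
        have hsub : x 0 = x 1 := Fintype.card_le_one_iff.mp hc1 (x 0) (x 1)
        have := hi hsub
        simp [Fin.ext_iff] at this
    · -- N ≥ 2
      obtain ⟨u, v, huv⟩ := Fintype.exists_pair_of_one_lt_card (α := V) (by rw [← hN]; omega)
      refine ⟨{u, v}, ?_, ?_⟩
      · rw [Set.ncard_pair huv]
        calc (N:ℝ) ^ δ ≤ 2 := hδ2
          _ = ((2:ℕ):ℝ) := by norm_num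
      · rcases hpair u v huv with h | h
        · exact Or.inl h
        · exact Or.inr h
end

section
/- Let 𝓕 be a nonprincipal ultrafilter on ℕ, (V n) a family of nonempty finite sets with |V n| → ∞ along 𝓕, and m ≥ 1. Let Y n ⊆ V n × (V n)^m and Z n ⊆ V n be families of subsets with each Z n nonempty, and suppose δ(Z) = α and that for all pairwise distinct germs a¹,…,a^m belonging to ∏ Z n / 𝓕, the fiber family F n = {x ∈ V n : (x, a¹ n, …, a^m n) ∈ Y n} satisfies δ(F) ≤ β (or is 𝓕-a.e. empty). Then the family X n = {x ∈ V n : ∃ pairwise distinct z₁,…,z_m ∈ Z n with (x, z₁,…,z_m) ∈ Y n} satisfies δ(X) ≤ mα + β (or X n is 𝓕-a.e. empty). -/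
open Filter

lemma fiber_count {V : Type} [Fintype V] {m : ℕ} (Y : Set (V × (Fin m → V))) (Z : Set V)
    (hX : {x : V | ∃ z : Fin m → V, (∀ i, z i ∈ Z) ∧ (∀ i j, i ≠ j → z i ≠ z j) ∧
      (x, z) ∈ Y}.Nonempty) :
    ∃ z : Fin m → V, (∀ i, z i ∈ Z) ∧ (∀ i j, i ≠ j → z i ≠ z j) ∧
      {x : V | ∃ z : Fin m → V, (∀ i, z i ∈ Z) ∧ (∀ i j, i ≠ j → z i ≠ z j) ∧
        (x, z) ∈ Y}.ncard ≤ Z.ncard ^ m * {x : V | (x, z) ∈ Y}.ncard := by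
  classical
  set X : Set V := {x : V | ∃ z : Fin m → V, (∀ i, z i ∈ Z) ∧ (∀ i j, i ≠ j → z i ≠ z j) ∧
      (x, z) ∈ Y} with hXdef
  set T : Finset (Fin m → V) :=
    Finset.univ.filter (fun z => (∀ i, z i ∈ Z) ∧ ∀ i j, i ≠ j → z i ≠ z j) with hTdef
  have hTne : T.Nonempty := by
    obtain ⟨x, z, h1, h2, _⟩ := hX
    exact ⟨z, by simp only [hTdef, Finset.mem_filter, Finset.mem_univ, true_and]; exact ⟨h1, h2⟩⟩
  set f : (Fin m → V) → ℕ := fun z => {x : V | (x, z) ∈ Y}.toFinset.card with hfdef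
  obtain ⟨z₀, hz₀T, hz₀⟩ := T.exists_mem_eq_sup hTne f
  have hz₀P : (∀ i, z₀ i ∈ Z) ∧ ∀ i j, i ≠ j → z₀ i ≠ z₀ j := by
    simpa [hTdef] using hz₀T
  refine ⟨z₀, hz₀P.1, hz₀P.2, ?_⟩
  have hsub : X.toFinset ⊆ T.biUnion (fun z => {x : V | (x, z) ∈ Y}.toFinset) := by
    intro x hx
    rw [Set.mem_toFinset] at hx
    obtain ⟨z, h1, h2, h3⟩ := hx
    exact Finset.mem_biUnion.2 ⟨z, by simp only [hTdef, Finset.mem_filter, Finset.mem_univ, true_and]; exact ⟨h1, h2⟩, by simpa using h3⟩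
  have h1 : X.toFinset.card ≤ ∑ z ∈ T, f z :=
    le_trans (Finset.card_le_card hsub) (Finset.card_biUnion_le)
  have h2 : ∑ z ∈ T, f z ≤ T.card * f z₀ := by
    have := Finset.sum_le_card_nsmul T f (f z₀) (fun z hz => hz₀ ▸ Finset.le_sup hz)
    simpa [smul_eq_mul] using this
  have h3 : T.card ≤ Z.ncard ^ m := by
    have hsub2 : T ⊆ Fintype.piFinset (fun _ : Fin m => Z.toFinset) := by
      intro z hz
      rw [Fintype.mem_piFinset]
      intro i
      rw [Set.mem_toFinset]
      exact ((Finset.mem_filter.1 hz).2).1 i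
    calc T.card ≤ (Fintype.piFinset (fun _ : Fin m => Z.toFinset)).card :=
          Finset.card_le_card hsub2
      _ = Z.ncard ^ m := by
          rw [Fintype.card_piFinset]
          simp [Set.ncard_eq_toFinset_card' Z]
  calc X.ncard = X.toFinset.card := Set.ncard_eq_toFinset_card' X
    _ ≤ T.card * f z₀ := le_trans h1 h2
    _ ≤ Z.ncard ^ m * f z₀ := Nat.mul_le_mul_right _ h3
    _ = Z.ncard ^ m * {x : V | (x, z₀) ∈ Y}.ncard := by
        rw [Set.ncard_eq_toFinset_card' {x : V | (x, z₀) ∈ Y}]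

theorem hasDim_exists_le'
    (𝓕 : Ultrafilter ℕ) (h𝓕 : ∀ s : Set ℕ, s.Finite → s ∉ 𝓕)
    (V : ℕ → Type) [∀ n, Fintype (V n)] [∀ n, Nonempty (V n)]
    (hV : Tendsto (fun n => Fintype.card (V n)) (𝓕 : Filter ℕ) atTop)
    (m : ℕ) (hm : 1 ≤ m)
    (Y : ∀ n, Set (V n × (Fin m → V n))) (Z : ∀ n, Set (V n))
    (hZne : ∀ n, (Z n).Nonempty)
    (α β : ℝ) (hdZ : Tendsto (fun n => Real.log ((Z n).ncard) / Real.log (Fintype.card (V n))) (𝓕 : Filter ℕ) (nhds α))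
    (hfib : ∀ a : Fin m → ∀ n, V n,
        (∀ i, {n | a i n ∈ Z n} ∈ 𝓕) →
        (∀ i j, i ≠ j → {n | a i n ≠ a j n} ∈ 𝓕) →
        ((∃ l : ℝ, Tendsto (fun n => Real.log (({x : V n | (x, fun i => a i n) ∈ Y n}).ncard) / Real.log (Fintype.card (V n))) (𝓕 : Filter ℕ) (nhds l) ∧ l ≤ β) ∨
          {n | {x : V n | (x, fun i => a i n) ∈ Y n} = ∅} ∈ 𝓕)) :
    (∃ l : ℝ, Tendsto (fun n => Real.log (({x : V n | ∃ z : Fin m → V n,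
          (∀ i, z i ∈ Z n) ∧ (∀ i j, i ≠ j → z i ≠ z j) ∧ (x, z) ∈ Y n}).ncard) / Real.log (Fintype.card (V n))) (𝓕 : Filter ℕ) (nhds l) ∧
        l ≤ m * α + β) ∨
      {n | {x : V n | ∃ z : Fin m → V n,
          (∀ i, z i ∈ Z n) ∧ (∀ i j, i ≠ j → z i ≠ z j) ∧ (x, z) ∈ Y n} = ∅} ∈ 𝓕 := by
  classical
  set Xs : ∀ n, Set (V n) := fun n => {x : V n | ∃ z : Fin m → V n,
      (∀ i, z i ∈ Z n) ∧ (∀ i j, i ≠ j → z i ≠ z j) ∧ (x, z) ∈ Y n} with hXsdef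
  rcases (𝓕.mem_or_compl_mem {n | Xs n = ∅}) with hemp | hne
  · exact Or.inr hemp
  left
  have hSX : {n | (Xs n).Nonempty} ∈ 𝓕 := by
    have : {n | Xs n = ∅}ᶜ = {n | (Xs n).Nonempty} := by
      ext n; simp [Set.nonempty_iff_ne_empty]
    rwa [this] at hne
  -- choose near-maximal fibers
  have hch : ∀ n, ∃ z : Fin m → V n, (Xs n).Nonempty →
      (∀ i, z i ∈ Z n) ∧ (∀ i j, i ≠ j → z i ≠ z j) ∧
      (Xs n).ncard ≤ (Z n).ncard ^ m * {x : V n | (x, z) ∈ Y n}.ncard := by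
    intro n
    by_cases h : (Xs n).Nonempty
    · obtain ⟨z, h1, h2, h3⟩ := fiber_count (Y n) (Z n) h
      exact ⟨z, fun _ => ⟨h1, h2, h3⟩⟩
    · exact ⟨fun _ => Classical.arbitrary (V n), fun h' => absurd h' h⟩
  choose zfun hzfun using hch
  set a : Fin m → ∀ n, V n := fun i n => zfun n i with hadef
  -- fibers of a
  set F : ∀ n, Set (V n) := fun n => {x : V n | (x, fun i => a i n) ∈ Y n} with hFdef
  have hkey : ∀ n, (Xs n).Nonempty →
      (∀ i, a i n ∈ Z n) ∧ (∀ i j, i ≠ j → a i n ≠ a j n) ∧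
      (Xs n).ncard ≤ (Z n).ncard ^ m * (F n).ncard := by
    intro n hn
    obtain ⟨h1, h2, h3⟩ := hzfun n hn
    refine ⟨h1, h2, ?_⟩
    have : (fun i => a i n) = zfun n := rfl
    rw [hFdef]
    simpa [this] using h3
  have hmemZ : ∀ i, {n | a i n ∈ Z n} ∈ 𝓕 :=
    fun i => 𝓕.toFilter.mem_of_superset hSX (fun n hn => (hkey n hn).1 i)
  have hdist : ∀ i j, i ≠ j → {n | a i n ≠ a j n} ∈ 𝓕 :=
    fun i j hij => 𝓕.toFilter.mem_of_superset hSX (fun n hn => (hkey n hn).2.1 i j hij)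
  have hFne : {n | (F n).Nonempty} ∈ 𝓕 := by
    refine 𝓕.toFilter.mem_of_superset hSX (fun n hn => ?_)
    have h3 := (hkey n hn).2.2
    have hXpos : 0 < (Xs n).ncard := (Set.ncard_pos (Set.toFinite _)).2 hn
    have : 0 < (F n).ncard := by
      by_contra h
      push_neg at h
      interval_cases h' : (F n).ncard
      · omega
    exact (Set.ncard_pos (Set.toFinite _)).1 this
  rcases hfib a hmemZ hdist with ⟨l', hl'dim, hl'β⟩ | hFe
  swap
  · exfalso
    have : {n | (F n).Nonempty} ∩ {n | F n = ∅} ∈ 𝓕 := Filter.inter_mem hFne hFe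
    obtain ⟨n, hn1, hn2⟩ := Filter.nonempty_of_mem this
    rw [Set.mem_setOf_eq] at hn2
    rw [Set.mem_setOf_eq, hn2] at hn1
    exact Set.not_nonempty_empty hn1
  -- large card set
  have hL2 : {n | 2 ≤ Fintype.card (V n)} ∈ 𝓕 := hV.eventually_ge_atTop 2
  set q : (∀ n, Set (V n)) → ℕ → ℝ :=
    fun A n => Real.log ((A n).ncard) / Real.log (Fintype.card (V n)) with hqdef
  -- the key eventual inequality
  have hineq : ∀ᶠ n in (𝓕 : Filter ℕ), q Xs n ≤ m * q Z n + q F n := by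
    filter_upwards [hSX, hL2] with n hn hcard
    have hLpos : 0 < Real.log (Fintype.card (V n)) := by
      apply Real.log_pos
      exact_mod_cast lt_of_lt_of_le one_lt_two (by exact_mod_cast hcard)
    obtain ⟨h1, h2, h3⟩ := hkey n hn
    have hZpos : 0 < (Z n).ncard := (Set.ncard_pos (Set.toFinite _)).2 (hZne n)
    have hFpos : 0 < (F n).ncard := by
      have hXpos : 0 < (Xs n).ncard := (Set.ncard_pos (Set.toFinite _)).2 hn
      by_contra h
      push_neg at h
      interval_cases h' : (F n).ncard
      · omega
    have hlog : Real.log ((Xs n).ncard) ≤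
        m * Real.log ((Z n).ncard) + Real.log ((F n).ncard) := by
      have hcast : ((Xs n).ncard : ℝ) ≤ ((Z n).ncard : ℝ) ^ m * ((F n).ncard : ℝ) := by
        exact_mod_cast h3
      have hXpos : 0 < (Xs n).ncard := (Set.ncard_pos (Set.toFinite _)).2 hn
      calc Real.log ((Xs n).ncard)
          ≤ Real.log (((Z n).ncard : ℝ) ^ m * ((F n).ncard : ℝ)) := by
            apply Real.log_le_log (by exact_mod_cast hXpos) hcast
        _ = m * Real.log ((Z n).ncard) + Real.log ((F n).ncard) := by
            rw [Real.log_mul (by positivity) (by positivity), Real.log_pow]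
    rw [hqdef]
    simp only
    rw [div_le_iff₀ hLpos] -- maybe easier: direct manipulation
    rw [add_mul, mul_assoc, div_mul_cancel₀ _ (ne_of_gt hLpos),
      div_mul_cancel₀ _ (ne_of_gt hLpos)]
    exact hlog
  -- existence of the limit by compactness
  have hIcc : ∀ᶠ n in (𝓕 : Filter ℕ), q Xs n ∈ Set.Icc (0:ℝ) 1 := by
    filter_upwards [hSX, hL2] with n hn hcard
    have hLpos : 0 < Real.log (Fintype.card (V n)) := by
      apply Real.log_pos
      exact_mod_cast lt_of_lt_of_le one_lt_two (by exact_mod_cast hcard)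
    have hXpos : 0 < (Xs n).ncard := (Set.ncard_pos (Set.toFinite _)).2 hn
    constructor
    · apply div_nonneg _ hLpos.le
      apply Real.log_natCast_nonneg
    · rw [div_le_one hLpos]
      apply Real.log_le_log (by exact_mod_cast hXpos)
      have : (Xs n).ncard ≤ Fintype.card (V n) := by
        have := Set.ncard_le_ncard (Set.subset_univ (Xs n)) (Set.toFinite _)
        rwa [Set.ncard_univ, Nat.card_eq_fintype_card] at this
      exact_mod_cast this
  obtain ⟨l, _, hle⟩ := isCompact_iff_ultrafilter_le_nhds.mp isCompact_Icc
    (𝓕.map (q Xs)) (by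
      rw [Ultrafilter.coe_map, le_principal_iff, Filter.mem_map]
      exact hIcc)
  have htend : Tendsto (q Xs) (𝓕 : Filter ℕ) (nhds l) := by
    rwa [Ultrafilter.coe_map] at hle
  refine ⟨l, htend, ?_⟩
  have htend2 : Tendsto (fun n => (m : ℝ) * q Z n + q F n) (𝓕 : Filter ℕ)
      (nhds ((m : ℝ) * α + l')) := ((hdZ.const_mul _).add hl'dim)
  have : l ≤ (m : ℝ) * α + l' := le_of_tendsto_of_tendsto htend htend2 hineq
  linarith


/-- The family `A` of nonempty finite subsets `A n ⊆ V n` has dimension `l` along the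
ultrafilter `𝓕`: the sequence `log |A n| / log |V n|` converges to `l` along `𝓕`. -/
def hasDim (𝓕 : Ultrafilter ℕ) {V : ℕ → Type} [∀ n, Fintype (V n)]
    (A : ∀ n, Set (V n)) (l : ℝ) : Prop :=
  Tendsto (fun n => Real.log ((A n).ncard) / Real.log (Fintype.card (V n)))
    (𝓕 : Filter ℕ) (nhds l)

/-- **Fiber-dimension bound.** If `δ(Z) = α` and every fiber of `Y` over an
`m`-tuple of pairwise distinct germs of `∏ Z n / 𝓕` has dimension at most `β`
(or is `𝓕`-a.e. empty), then the set of points covered by some fiber over a tuple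
of pairwise distinct elements of `Z` has dimension at most `m·α + β`
(or is `𝓕`-a.e. empty). -/
theorem hasDim_exists_le
    (𝓕 : Ultrafilter ℕ) (h𝓕 : ∀ s : Set ℕ, s.Finite → s ∉ 𝓕)
    (V : ℕ → Type) [∀ n, Fintype (V n)] [∀ n, Nonempty (V n)]
    (hV : Tendsto (fun n => Fintype.card (V n)) (𝓕 : Filter ℕ) atTop)
    (m : ℕ) (hm : 1 ≤ m)
    (Y : ∀ n, Set (V n × (Fin m → V n))) (Z : ∀ n, Set (V n))
    (hZne : ∀ n, (Z n).Nonempty)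
    (α β : ℝ) (hdZ : hasDim 𝓕 Z α)
    (hfib : ∀ a : Fin m → ∀ n, V n,
        (∀ i, {n | a i n ∈ Z n} ∈ 𝓕) →
        (∀ i j, i ≠ j → {n | a i n ≠ a j n} ∈ 𝓕) →
        ((∃ l : ℝ, hasDim 𝓕 (fun n => {x : V n | (x, fun i => a i n) ∈ Y n}) l ∧ l ≤ β) ∨
          {n | {x : V n | (x, fun i => a i n) ∈ Y n} = ∅} ∈ 𝓕)) :
    (∃ l : ℝ, hasDim 𝓕
        (fun n => {x : V n | ∃ z : Fin m → V n,
          (∀ i, z i ∈ Z n) ∧ (∀ i j, i ≠ j → z i ≠ z j) ∧ (x, z) ∈ Y n}) l ∧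
        l ≤ m * α + β) ∨
      {n | {x : V n | ∃ z : Fin m → V n,
          (∀ i, z i ∈ Z n) ∧ (∀ i j, i ≠ j → z i ≠ z j) ∧ (x, z) ∈ Y n} = ∅} ∈ 𝓕 := by
  exact hasDim_exists_le' 𝓕 h𝓕 V hV m hm Y Z hZne α β hdZ hfib
end

section
/- Let V be a finite set, k ≥ 2, r ⊆ V^k a symmetric k-ary relation (invariant under permutations of coordinates), and B ⊆ V. Let A ⊆ B be maximal under inclusion among subsets of B all of whose k-tuples of pairwise distinct elements belong to r. Then for every b ∈ B \ A there exist pairwise distinct a₁,…,a_{k−1} ∈ A with (a₁,…,a_{k−1}, b) ∉ r; consequently, |B| ≤ |A| + |A|^{k−1} · M, where M is the maximum over all tuples (a₁,…,a_{k−1}) of pairwise distinct elements of A of |{b ∈ B : (a₁,…,a_{k−1}, b) ∉ r}| (with M = 0 if |A| < k−1). -/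
/-- Given a `(k-1)`-tuple `a` and `b : V`, form the `k`-tuple `(a₁, …, a_{k-1}, b)`. -/
def appendLast {V : Type*} {k : ℕ} (a : Fin (k - 1) → V) (b : V) : Fin k → V :=
  fun t => if h : (t : ℕ) < k - 1 then a ⟨(t : ℕ), h⟩ else b

/-- **Maximal homogeneous sets.** Let `r ⊆ V^k` be a symmetric relation, `B ⊆ V`, and
`A ⊆ B` maximal among subsets of `B` all of whose `k`-tuples of pairwise distinct
elements lie in `r`. Then every `b ∈ B \ A` admits pairwise distinct
`a₁, …, a_{k-1} ∈ A` with `(a₁, …, a_{k-1}, b) ∉ r`; consequently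
`|B| ≤ |A| + |A|^{k-1} · M`, where `M` bounds the size of the sets
`{b ∈ B : (a₁, …, a_{k-1}, b) ∉ r}` over pairwise distinct tuples from `A`. -/
theorem maximal_homogeneous_covers
    (V : Type) [Fintype V] (k : ℕ) (hk : 2 ≤ k)
    (r : Set (Fin k → V))
    (hsym : ∀ (σ : Equiv.Perm (Fin k)) (x : Fin k → V), x ∈ r → x ∘ σ ∈ r)
    (B A : Set V) (hAB : A ⊆ B)
    (hAhom : ∀ x : Fin k → V, (∀ i, x i ∈ A) → Function.Injective x → x ∈ r)
    (hAmax : ∀ A' : Set V, A ⊆ A' → A' ⊆ B →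
      (∀ x : Fin k → V, (∀ i, x i ∈ A') → Function.Injective x → x ∈ r) → A' = A) :
    (∀ b ∈ B \ A, ∃ a : Fin (k - 1) → V,
        (∀ i, a i ∈ A) ∧ Function.Injective a ∧ appendLast a b ∉ r) ∧
    (∀ M : ℕ,
      (∀ a : Fin (k - 1) → V, (∀ i, a i ∈ A) → Function.Injective a →
        {b ∈ B | appendLast a b ∉ r}.ncard ≤ M) →
      B.ncard ≤ A.ncard + A.ncard ^ (k - 1) * M) := by
  classical
  have hk1 : k - 1 < k := by omega
  have part1 : ∀ b ∈ B \ A, ∃ a : Fin (k - 1) → V,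
      (∀ i, a i ∈ A) ∧ Function.Injective a ∧ appendLast a b ∉ r := by
    intro b hb
    obtain ⟨hbB, hbA⟩ := hb
    -- A ∪ {b} fails homogeneity
    have hne : insert b A ≠ A := by
      intro h
      exact hbA (h ▸ Set.mem_insert b A)
    have hfail : ¬ (∀ x : Fin k → V, (∀ i, x i ∈ insert b A) → Function.Injective x → x ∈ r) := by
      intro h
      exact hne (hAmax _ (Set.subset_insert b A) (Set.insert_subset hbB hAB) h)
    push_neg at hfail
    obtain ⟨x, hx, hxinj, hxr⟩ := hfail
    -- some coordinate equals b
    have hex : ∃ i₀, x i₀ = b := by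
      by_contra h
      push_neg at h
      exact hxr (hAhom x (fun i => by
        rcases hx i with h' | h'
        · exact absurd h' (h i)
        · exact h') hxinj)
    obtain ⟨i₀, hi₀⟩ := hex
    set last : Fin k := ⟨k - 1, hk1⟩ with hlast
    set σ : Equiv.Perm (Fin k) := Equiv.swap last i₀ with hσ
    set y : Fin k → V := x ∘ σ with hy
    have hylast : y last = b := by
      simp [hy, hσ, Equiv.swap_apply_left, hi₀]
    have hyr : y ∉ r := by
      intro h
      have := hsym σ y h
      have hyy : y ∘ σ = x := by
        funext t
        simp [hy, hσ, Function.comp, Equiv.swap_apply_self]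
      exact hxr (hyy ▸ this)
    have hyinj : Function.Injective y := hxinj.comp σ.injective
    refine ⟨fun j => y ⟨j, lt_trans j.2 hk1⟩, ?_, ?_, ?_⟩
    · intro j
      have hne' : (⟨(j : ℕ), lt_trans j.2 hk1⟩ : Fin k) ≠ last := by
        simp only [hlast, Fin.ne_iff_vne]
        exact Nat.ne_of_lt j.2
      have : y ⟨(j : ℕ), lt_trans j.2 hk1⟩ ≠ b := by
        rw [← hylast]
        exact fun h => hne' (hyinj h)
      rcases hx (σ ⟨(j : ℕ), lt_trans j.2 hk1⟩) with h' | h'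
      · exact absurd h' this
      · exact h'
    · intro j1 j2 h
      exact Fin.ext (Fin.mk.inj_iff.mp (hyinj h))
    · have : appendLast (fun j => y ⟨(j:ℕ), lt_trans j.2 hk1⟩) b = y := by
        funext t
        by_cases h : (t : ℕ) < k - 1
        · simp [appendLast, h]
        · have : t = last := by
            simp only [hlast, Fin.ext_iff]
            omega
          simp [appendLast, h, this, hylast]
      rw [this]
      exact hyr
  refine ⟨part1, ?_⟩
  intro M hM
  -- Finset setup
  set Af : Finset V := A.toFinset with hAf
  set Bf : Finset V := B.toFinset with hBf
  set Sf : Finset (Fin (k - 1) → V) :=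
    Finset.univ.filter (fun a => (∀ i, a i ∈ A) ∧ Function.Injective a) with hSf
  set Tf : (Fin (k - 1) → V) → Finset V :=
    fun a => Bf.filter (fun b => appendLast a b ∉ r) with hTf
  have hcover : Bf ⊆ Af ∪ Sf.biUnion Tf := by
    intro b hb
    have hbB : b ∈ B := by simpa [hBf] using hb
    by_cases hbA : b ∈ A
    · exact Finset.mem_union_left _ (by simpa [hAf] using hbA)
    · obtain ⟨a, ha1, ha2, ha3⟩ := part1 b ⟨hbB, hbA⟩
      refine Finset.mem_union_right _ (Finset.mem_biUnion.mpr ⟨a, ?_, ?_⟩)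
      · simp [hSf, ha1, ha2]
      · simp [hTf, hBf, hbB, ha3]
  have hTcard : ∀ a ∈ Sf, (Tf a).card ≤ M := by
    intro a ha
    simp only [hSf, Finset.mem_filter] at ha
    have := hM a ha.2.1 ha.2.2
    have heq : {b ∈ B | appendLast a b ∉ r}.ncard = (Tf a).card := by
      rw [Set.ncard_eq_toFinset_card']
      congr 1
      ext b
      simp [hTf, hBf]
    omega
  have hScard : Sf.card ≤ Af.card ^ (k - 1) := by
    have hsub : Sf ⊆ Fintype.piFinset (fun _ : Fin (k - 1) => Af) := by
      intro a ha
      simp only [hSf, Finset.mem_filter] at ha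
      simp only [Fintype.mem_piFinset]
      intro i
      simpa [hAf] using ha.2.1 i
    calc Sf.card ≤ (Fintype.piFinset (fun _ : Fin (k - 1) => Af)).card := Finset.card_le_card hsub
      _ = Af.card ^ (k - 1) := by rw [Fintype.card_piFinset]; simp
  have hBA : B.ncard = Bf.card := Set.ncard_eq_toFinset_card' B
  have hAA : A.ncard = Af.card := Set.ncard_eq_toFinset_card' A
  rw [hBA, hAA]
  calc Bf.card ≤ (Af ∪ Sf.biUnion Tf).card := Finset.card_le_card hcover
    _ ≤ Af.card + (Sf.biUnion Tf).card := Finset.card_union_le _ _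
    _ ≤ Af.card + Sf.card * M := by
        have := Finset.card_biUnion_le_card_mul Sf Tf M hTcard
        omega
    _ ≤ Af.card + Af.card ^ (k - 1) * M := by
        have := Nat.mul_le_mul_right M hScard
        omega
end

section
/- Let 𝓕 be a nonprincipal ultrafilter on ℕ, (V n) a family of nonempty finite sets with |V n| → ∞ along 𝓕, k ≥ 2, and r n ⊆ (V n)^k symmetric relations. Let B n ⊆ V n be nonempty finite subsets with δ(B) = α, and suppose that for every tuple of pairwise distinct germs a¹,…,a^{k−1} belonging to ∏ B n / 𝓕, the family C n = {b ∈ B n : (a¹ n, …, a^{k−1} n, b) ∉ r n} satisfies δ(C) ≤ 0 (or is 𝓕-a.e. empty). For each n let A n ⊆ B n be maximal under inclusion among subsets of B n all of whose k-tuples of pairwise distinct elements belong to r n, and suppose each A n is nonempty. Then δ(A) ≥ α / (k−1). -/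
open Filter

/-!
If `b ∈ B n \ A n`, maximality makes `A n ∪ {b}` non-homogeneous, and by symmetry of `r n`
the offending injective `k`-tuple can be taken to end in `b`. So `b` lies in the bad set
`C_t = {b ∈ B n | (t, b) ∉ r n}` of some injective `(k-1)`-tuple `t` of `A n`, whence
`|B n| ≤ |A n|^(k-1) (|C_t| + 1)` for a `t` maximising `|C_t|`. Choosing such a `t` for
𝓕-almost every `n`, the hypothesis on bad sets gives `δ(C_t) ≤ 0`, and dividing the logarithm
of the bound by `log |V n| → ∞` yields `α ≤ (k-1) δ(A)`. When `A n` has no injective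
`(k-1)`-tuple, the same argument shows `A n = B n`.
-/

open Function

theorem appendLast_eq_snoc {V : Type*} {m : ℕ} (t : Fin m → V) (b : V) :
    appendLast (k := m + 1) t b = Fin.snoc t b := by
  ext i
  simp [appendLast, Fin.snoc, Fin.castLT]

theorem Set.ncard_univ_pi {ι : Type*} [Fintype ι] {α : ι → Type*} (s : ∀ i, Set (α i)) :
    (Set.univ.pi s).ncard = ∏ i, (s i).ncard := by
  simp [Set.ncard_def]

theorem Set.Finite.ncard_biUnion_le_mul {ι α : Type*} {T : Set ι} (hT : T.Finite)
    {C : ι → Set α} {M : ℕ} (h : ∀ t ∈ T, (C t).ncard ≤ M) :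
    (⋃ t ∈ T, C t).ncard ≤ T.ncard * M := by
  calc (⋃ t ∈ T, C t).ncard ≤ ∑ t ∈ hT.toFinset, (C t).ncard := by
        simpa using hT.toFinset.set_ncard_biUnion_le C
    _ ≤ hT.toFinset.card • M := Finset.sum_le_card_nsmul _ _ _ (by simpa using h)
    _ = T.ncard * M := by rw [smul_eq_mul, Set.ncard_eq_toFinset_card T hT]

def IsHomogeneous {ι V : Type*} (r : Set (ι → V)) (A : Set V) : Prop :=
  ∀ x : ι → V, (∀ i, x i ∈ A) → Injective x → x ∈ r

section Maximal

variable {V : Type*} {m : ℕ} {r : Set (Fin (m + 1) → V)} {A B : Set V}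

theorem exists_snoc_notMem_of_not_isHomogeneous_insert
    (hsym : ∀ (σ : Equiv.Perm (Fin (m + 1))) x, x ∈ r → x ∘ σ ∈ r)
    (hA : IsHomogeneous r A) {b : V} (hb : ¬ IsHomogeneous r (insert b A)) :
    ∃ t : Fin m → V, Injective t ∧ (∀ i, t i ∈ A) ∧ Fin.snoc t b ∉ r := by
  simp only [IsHomogeneous, not_forall] at hb
  obtain ⟨x, hxA, hinj, hxr⟩ := hb
  obtain ⟨i, rfl⟩ : ∃ i, x i = b := by
    by_contra! h
    exact hxr (hA x (fun j => (hxA j).resolve_left (h j)) hinj)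
  set σ := Equiv.swap i (Fin.last m)
  have hy : Injective (x ∘ σ) := hinj.comp σ.injective
  have hlast : (x ∘ σ) (Fin.last m) = x i := by simp [σ]
  refine ⟨Fin.init (x ∘ σ), hy.comp (Fin.castSucc_injective m), fun j => ?_,
    fun hr => hxr ?_⟩
  · exact (hxA _).resolve_left (hlast ▸ hy.ne (Fin.castSucc_ne_last j))
  · rw [← hlast, Fin.snoc_init_self] at hr
    convert hsym σ _ hr using 1
    ext j
    simp [σ]

theorem eq_or_exists_ncard_le_pow_mul [Finite V] (hm : m ≠ 0)
    (hsym : ∀ (σ : Equiv.Perm (Fin (m + 1))) x, x ∈ r → x ∘ σ ∈ r)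
    (hAB : A ⊆ B) (hA : IsHomogeneous r A)
    (hmax : ∀ A', A ⊆ A' → A' ⊆ B → IsHomogeneous r A' → A' = A) :
    A = B ∨ ∃ t : Fin m → V, Injective t ∧ (∀ i, t i ∈ A) ∧
      B.ncard ≤ A.ncard ^ m * ({b ∈ B | Fin.snoc t b ∉ r}.ncard + 1) := by
  set T : Set (Fin m → V) := {t | Injective t ∧ ∀ i, t i ∈ A}
  set C : (Fin m → V) → Set V := fun t => {b ∈ B | Fin.snoc t b ∉ r}
  have hcover : B ⊆ A ∪ ⋃ t ∈ T, C t := by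
    intro b hb
    by_cases hbA : b ∈ A
    · exact .inl hbA
    obtain ⟨t, ht, htA, hr⟩ := exists_snoc_notMem_of_not_isHomogeneous_insert hsym hA fun h =>
      hbA (hmax _ (Set.subset_insert b A) (Set.insert_subset hb hAB) h ▸ Set.mem_insert b A)
    exact .inr (Set.mem_biUnion (x := t) ⟨ht, htA⟩ ⟨hb, hr⟩)
  rcases T.eq_empty_or_nonempty with hT | hT
  · left
    exact hAB.antisymm (by simpa [hT] using hcover)
  right
  obtain ⟨t, ht, htmax⟩ := T.exists_max_image (fun t => (C t).ncard) T.toFinite hT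
  have hTcard : T.ncard ≤ A.ncard ^ m := by
    calc T.ncard ≤ (Set.univ.pi fun _ : Fin m => A).ncard :=
          Set.ncard_le_ncard (fun t ht i _ => ht.2 i) (Set.toFinite _)
      _ = A.ncard ^ m := by simp [Set.ncard_univ_pi]
  refine ⟨t, ht.1, ht.2, ?_⟩
  calc B.ncard ≤ A.ncard + (⋃ t ∈ T, C t).ncard :=
        (Set.ncard_le_ncard hcover (Set.toFinite _)).trans (Set.ncard_union_le _ _)
    _ ≤ A.ncard ^ m + A.ncard ^ m * (C t).ncard := by
        gcongr
        · exact Nat.le_self_pow hm _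
        · exact (T.toFinite.ncard_biUnion_le_mul htmax).trans (Nat.mul_le_mul_right _ hTcard)
    _ = A.ncard ^ m * ((C t).ncard + 1) := by ring

end Maximal

theorem Real.log_natCast_le_log_natCast {a b : ℕ} (h : a ≤ b) : Real.log a ≤ Real.log b := by
  rcases Nat.eq_zero_or_pos a with rfl | ha
  · simpa using Real.log_natCast_nonneg b
  · exact Real.log_le_log (by exact_mod_cast ha) (by exact_mod_cast h)

theorem Real.log_natCast_le_of_le_pow_mul_succ {a b c m : ℕ} (h : b ≤ a ^ m * (c + 1)) :
    Real.log b ≤ m * Real.log a + (Real.log c + Real.log 2) := by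
  have hc : Real.log ((c + 1 : ℕ) : ℝ) ≤ Real.log c + Real.log 2 := by
    rcases Nat.eq_zero_or_pos c with rfl | hc
    · simpa using Real.log_nonneg one_le_two
    · have hc1 : (1 : ℝ) ≤ c := by exact_mod_cast hc
      rw [← Real.log_mul (by positivity) two_ne_zero]
      exact Real.log_le_log (by positivity) (by push_cast; linarith)
  rcases Nat.eq_zero_or_pos b with rfl | hb
  · rw [Nat.cast_zero, Real.log_zero]
    exact add_nonneg (mul_nonneg m.cast_nonneg (Real.log_natCast_nonneg a))
      (add_nonneg (Real.log_natCast_nonneg c) (Real.log_nonneg one_le_two))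
  · have ha : (a : ℝ) ^ m ≠ 0 := by
      exact_mod_cast (Nat.pos_of_mul_pos_right (hb.trans_le h)).ne'
    calc Real.log b ≤ Real.log ((a ^ m * (c + 1) : ℕ) : ℝ) :=
          Real.log_natCast_le_log_natCast h
      _ = m * Real.log a + Real.log ((c + 1 : ℕ) : ℝ) := by
        rw [Nat.cast_mul, Nat.cast_pow, Real.log_mul ha (by positivity), Real.log_pow]
      _ ≤ m * Real.log a + (Real.log c + Real.log 2) := by linarith

theorem log_ncard_div_log_card_mem_Icc {W : Type*} [Fintype W] (A : Set W) :
    Real.log A.ncard / Real.log (Fintype.card W) ∈ Set.Icc (0 : ℝ) 1 := by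
  refine ⟨div_nonneg (Real.log_natCast_nonneg _) (Real.log_natCast_nonneg _),
    div_le_one_of_le₀ (Real.log_natCast_le_log_natCast ?_) (Real.log_natCast_nonneg _)⟩
  simpa using A.ncard_le_card

section Dimension

variable {𝓕 : Ultrafilter ℕ} {V : ℕ → Type} [∀ n, Fintype (V n)]

variable (𝓕) in
theorem exists_hasDim (A : ∀ n, Set (V n)) : ∃ l, hasDim 𝓕 A l := by
  obtain ⟨l, -, hl⟩ := isCompact_Icc.ultrafilter_le_nhds
    (𝓕.map fun n => Real.log (A n).ncard / Real.log (Fintype.card (V n)))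
    (by rw [Ultrafilter.coe_map, le_principal_iff]
        exact mem_map.2 (univ_mem' fun n => log_ncard_div_log_card_mem_Icc (A n)))
  exact ⟨l, hl⟩

theorem hasDim.nonneg {A : ∀ n, Set (V n)} {l : ℝ} (h : hasDim 𝓕 A l) : 0 ≤ l :=
  ge_of_tendsto' h fun n => (log_ncard_div_log_card_mem_Icc (A n)).1

theorem hasDim.congr {A B : ∀ n, Set (V n)} {l : ℝ} (h : hasDim 𝓕 A l)
    (hAB : ∀ᶠ n in 𝓕, A n = B n) : hasDim 𝓕 B l :=
  Tendsto.congr' (hAB.mono fun n hn => by simp only [hn]) h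

theorem hasDim_zero_of_eventually_eq_empty {A : ∀ n, Set (V n)}
    (h : ∀ᶠ n in 𝓕, A n = ∅) : hasDim 𝓕 A 0 :=
  tendsto_const_nhds.congr' (h.mono fun n hn => by simp [hn])

theorem hasDim_le_mul_add_of_ncard_le_pow_mul
    (hV : Tendsto (fun n => Fintype.card (V n)) 𝓕 atTop) {A B C : ∀ n, Set (V n)}
    {a b c : ℝ} {m : ℕ} (hA : hasDim 𝓕 A a) (hB : hasDim 𝓕 B b) (hC : hasDim 𝓕 C c)
    (hcard : ∀ᶠ n in 𝓕, (B n).ncard ≤ (A n).ncard ^ m * ((C n).ncard + 1)) :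
    b ≤ m * a + c := by
  set L := fun n => Real.log (Fintype.card (V n))
  have hL : Tendsto L 𝓕 atTop :=
    Real.tendsto_log_atTop.comp (tendsto_natCast_atTop_atTop.comp hV)
  have hbound : ∀ᶠ n in 𝓕, Real.log (B n).ncard / L n ≤
      m * (Real.log (A n).ncard / L n) + (Real.log (C n).ncard / L n + Real.log 2 / L n) := by
    filter_upwards [hcard, hL.eventually_gt_atTop 0] with n hn hLn
    calc _ ≤ (m * Real.log (A n).ncard + (Real.log (C n).ncard + Real.log 2)) / L n :=
          div_le_div_of_nonneg_right (Real.log_natCast_le_of_le_pow_mul_succ hn) hLn.le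
      _ = _ := by ring
  simpa using le_of_tendsto_of_tendsto hB
    ((hA.const_mul _).add (hC.add (tendsto_const_nhds.div_atTop hL))) hbound

end Dimension

theorem hasDim_maximal_homogeneous_general
    (𝓕 : Ultrafilter ℕ)
    (V : ℕ → Type) [∀ n, Fintype (V n)] [∀ n, Nonempty (V n)]
    (hV : Tendsto (fun n => Fintype.card (V n)) (𝓕 : Filter ℕ) atTop)
    (k : ℕ) (hk : 2 ≤ k)
    (r : ∀ n, Set (Fin k → V n))
    (hsym : ∀ n (σ : Equiv.Perm (Fin k)) (x : Fin k → V n), x ∈ r n → x ∘ σ ∈ r n)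
    (B : ∀ n, Set (V n))
    (α : ℝ) (hdB : hasDim 𝓕 B α)
    (hsmall : ∀ a : Fin (k - 1) → ∀ n, V n,
        (∀ i, {n | a i n ∈ B n} ∈ 𝓕) →
        (∀ i j, i ≠ j → {n | a i n ≠ a j n} ∈ 𝓕) →
        ((∃ l : ℝ, hasDim 𝓕
            (fun n => {b ∈ B n | appendLast (fun i => a i n) b ∉ r n}) l ∧ l ≤ 0) ∨
          {n | {b ∈ B n | appendLast (fun i => a i n) b ∉ r n} = ∅} ∈ 𝓕))
    (A : ∀ n, Set (V n)) (hAB : ∀ n, A n ⊆ B n)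
    (hAhom : ∀ n (x : Fin k → V n), (∀ i, x i ∈ A n) → Function.Injective x → x ∈ r n)
    (hAmax : ∀ n (A' : Set (V n)), A n ⊆ A' → A' ⊆ B n →
      (∀ x : Fin k → V n, (∀ i, x i ∈ A') → Function.Injective x → x ∈ r n) →
      A' = A n) :
    ∃ l : ℝ, hasDim 𝓕 A l ∧ α / ((k : ℝ) - 1) ≤ l := by
  obtain ⟨m, rfl⟩ : ∃ m, k = m + 1 := ⟨k - 1, by omega⟩
  obtain ⟨l, hl⟩ := exists_hasDim 𝓕 A
  refine ⟨l, hl, ?_⟩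
  have hm : (1 : ℝ) ≤ m := by exact_mod_cast (by omega : 1 ≤ m)
  rw [Nat.cast_succ, add_sub_cancel_right, div_le_iff₀ (by linarith)]
  have hdich n := eq_or_exists_ncard_le_pow_mul (by omega) (hsym n) (hAB n) (hAhom n) (hAmax n)
  rcases Ultrafilter.eventually_or.1 (Eventually.of_forall hdich) with hAB_eq | hex
  · obtain rfl : l = α := tendsto_nhds_unique (hl.congr hAB_eq) hdB
    nlinarith [hdB.nonneg]
  obtain ⟨t, ht⟩ := Filter.skolem.1 hex
  obtain ⟨c, hc, hc0⟩ : ∃ c, hasDim 𝓕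
      (fun n => {b ∈ B n | appendLast (k := m + 1) (fun i => t n i) b ∉ r n}) c ∧ c ≤ 0 :=
    (hsmall (fun i n => t n i) (fun i => ht.mono fun n hn => hAB n (hn.2.1 i))
      (fun i j hij => ht.mono fun n hn => hn.1.ne hij)).elim id
      fun h => ⟨0, hasDim_zero_of_eventually_eq_empty h, le_rfl⟩
  have hα := hasDim_le_mul_add_of_ncard_le_pow_mul hV hl hdB hc
    (ht.mono fun n hn => by simpa only [appendLast_eq_snoc] using hn.2.2)
  linarith

/-- **Dimension of maximal homogeneous subsets.** If `δ(B) = α`, every "bad" family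
`C n = {b ∈ B n : (a¹ n, …, a^{k-1} n, b) ∉ r n}` over pairwise distinct germs of
`∏ B n / 𝓕` has dimension at most `0` (or is `𝓕`-a.e. empty), and each `A n ⊆ B n`
is a nonempty maximal `r n`-homogeneous subset, then `δ(A) ≥ α / (k - 1)`. -/
theorem hasDim_maximal_homogeneous
    (𝓕 : Ultrafilter ℕ) (h𝓕 : ∀ s : Set ℕ, s.Finite → s ∉ 𝓕)
    (V : ℕ → Type) [∀ n, Fintype (V n)] [∀ n, Nonempty (V n)]
    (hV : Tendsto (fun n => Fintype.card (V n)) (𝓕 : Filter ℕ) atTop)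
    (k : ℕ) (hk : 2 ≤ k)
    (r : ∀ n, Set (Fin k → V n))
    (hsym : ∀ n (σ : Equiv.Perm (Fin k)) (x : Fin k → V n), x ∈ r n → x ∘ σ ∈ r n)
    (B : ∀ n, Set (V n)) (hBne : ∀ n, (B n).Nonempty)
    (α : ℝ) (hdB : hasDim 𝓕 B α)
    (hsmall : ∀ a : Fin (k - 1) → ∀ n, V n,
        (∀ i, {n | a i n ∈ B n} ∈ 𝓕) →
        (∀ i j, i ≠ j → {n | a i n ≠ a j n} ∈ 𝓕) →
        ((∃ l : ℝ, hasDim 𝓕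
            (fun n => {b ∈ B n | appendLast (fun i => a i n) b ∉ r n}) l ∧ l ≤ 0) ∨
          {n | {b ∈ B n | appendLast (fun i => a i n) b ∉ r n} = ∅} ∈ 𝓕))
    (A : ∀ n, Set (V n)) (hAB : ∀ n, A n ⊆ B n) (hAne : ∀ n, (A n).Nonempty)
    (hAhom : ∀ n (x : Fin k → V n), (∀ i, x i ∈ A n) → Function.Injective x → x ∈ r n)
    (hAmax : ∀ n (A' : Set (V n)), A n ⊆ A' → A' ⊆ B n →
      (∀ x : Fin k → V n, (∀ i, x i ∈ A') → Function.Injective x → x ∈ r n) →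
      A' = A n) :
    ∃ l : ℝ, hasDim 𝓕 A l ∧ α / ((k : ℝ) - 1) ≤ l :=
  hasDim_maximal_homogeneous_general 𝓕 V hV k hk r hsym B α hdB hsmall A hAB hAhom hAmax
end

section
/- For every m ∈ ℕ there exists a constant δ = δ(m) > 0 such that every finite graph G = (V, E) without the m-order property contains either a clique or an anticlique of size at least |V|^δ. -/
/-!
Build sequences `e₀, e₁, …` in which every vertex is adjacent either to all of its successors
or to none of them, with the pattern of these two types prescribed by `τ`. Removing a vertex `c`,
its neighbourhood or its non-neighbourhood is large, and `c` extends a clique, an anticlique, or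
such a sequence; the count `b ^ k + b ^ (k + 1) ≤ (b + 1) ^ (k + 1)` then shows that `(p + q) ^ k`
vertices force a `p`-clique, a `q`-anticlique or a sequence of length `k`. A sequence of length
`2m` with alternating types is an `m`-order property (even terms against odd terms), so in an
`m`-stable graph on `n` vertices we get a homogeneous set of size about `n ^ (1 / (2m))`;
the exponent `1 / (6(m + 1))` leaves room for rounding, and for small `n` a pair of vertices
suffices.
-/

open Finset

lemma pow_add_pow_succ_le_succ_pow (b k : ℕ) : b ^ k + b ^ (k + 1) ≤ (b + 1) ^ (k + 1) :=
  calc b ^ k + b ^ (k + 1) = b ^ k * (b + 1) := by ring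
    _ ≤ (b + 1) ^ k * (b + 1) := Nat.mul_le_mul_right _ (Nat.pow_le_pow_left b.le_succ k)
    _ = (b + 1) ^ (k + 1) := (pow_succ _ _).symm

lemma natCast_add_ceil_pow_le {x : ℝ} (hx : 2 < x) (m : ℕ) :
    ((⌈x⌉₊ + ⌈x⌉₊ : ℕ) : ℝ) ^ (2 * m) ≤ x ^ (6 * (m + 1)) := by
  have hceil : (⌈x⌉₊ : ℝ) < x + 1 := Nat.ceil_lt_add_one (by linarith)
  have h2t : ((⌈x⌉₊ + ⌈x⌉₊ : ℕ) : ℝ) ≤ x ^ 3 := by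
    push_cast
    nlinarith [mul_pos (by linarith : (0 : ℝ) < x - 2) (by positivity : (0 : ℝ) < x ^ 2 + 2 * x + 2)]
  calc ((⌈x⌉₊ + ⌈x⌉₊ : ℕ) : ℝ) ^ (2 * m) ≤ (x ^ 3) ^ (2 * m) :=
        pow_le_pow_left₀ (by positivity) h2t _
    _ ≤ (x ^ 3) ^ (2 * (m + 1)) := pow_le_pow_right₀ (one_le_pow₀ (by linarith)) (by omega)
    _ = x ^ (6 * (m + 1)) := by rw [← pow_mul]; ring_nf

namespace SimpleGraph

variable {V : Type*} {G : SimpleGraph V}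

def IsTypedSeq (G : SimpleGraph V) (τ : ℕ → Prop) {k : ℕ} (e : Fin k → V) : Prop :=
  ∀ i j, i < j → (G.Adj (e i) (e j) ↔ τ i)

lemma IsTypedSeq.cons {τ : ℕ → Prop} {k : ℕ} {e : Fin k → V} {c : V}
    (he : G.IsTypedSeq (fun n => τ (n + 1)) e) (hc : ∀ j, G.Adj c (e j) ↔ τ 0) :
    G.IsTypedSeq τ (Fin.cons c e : Fin (k + 1) → V) := by
  intro i j hij
  cases j using Fin.cases with
  | zero => exact absurd hij (Fin.not_lt_zero i)
  | succ j =>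
    cases i using Fin.cases with
    | zero => simpa using hc j
    | succ i => simpa using he i j (Fin.succ_lt_succ_iff.mp hij)

lemma exists_order_of_isTypedSeq_even {m : ℕ} {e : Fin (2 * m) → V}
    (he : G.IsTypedSeq Even e) : ∃ a b : Fin m → V, ∀ i j, G.Adj (a i) (b j) ↔ i ≤ j := by
  refine ⟨fun i => e ⟨2 * i, by omega⟩, fun j => e ⟨2 * j + 1, by omega⟩, fun i j => ?_⟩
  rcases le_or_gt i j with hij | hij
  · rw [he _ _ (Fin.mk_lt_mk.2 (by omega))]
    exact iff_of_true (even_two_mul _) hij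
  · rw [G.adj_comm, he _ _ (Fin.mk_lt_mk.2 (by omega))]
    exact iff_of_false (Nat.not_even_iff_odd.2 (odd_two_mul_add_one _)) hij.not_ge

lemma exists_isNClique_insert {H : SimpleGraph V} {N A : Finset V} {c : V} {n : ℕ}
    (hc : c ∈ A) (hNA : N ⊆ A) (hcN : ∀ x ∈ N, H.Adj c x) (hN : ∃ s ⊆ N, H.IsNClique n s) :
    ∃ s ⊆ A, H.IsNClique (n + 1) s := by
  classical
  obtain ⟨s, hsN, hs⟩ := hN
  exact ⟨insert c s, insert_subset hc (hsN.trans hNA), hs.insert fun x hx => hcN x (hsN hx)⟩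

lemma exists_adj_compl_adj_split (G : SimpleGraph V) {A : Finset V} {c : V} (hc : c ∈ A) :
    ∃ N ⊆ A, ∃ M ⊆ A, #N + #M + 1 = #A ∧ (∀ x ∈ N, G.Adj c x) ∧ ∀ x ∈ M, Gᶜ.Adj c x := by
  classical
  refine ⟨(A.erase c).filter (G.Adj c), (filter_subset _ _).trans (erase_subset _ _),
    (A.erase c).filter (¬G.Adj c ·), (filter_subset _ _).trans (erase_subset _ _), ?_,
    fun x hx => (mem_filter.1 hx).2, fun x hx => ?_⟩
  · rw [card_filter_add_card_filter_not, card_erase_add_one hc]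
  · obtain ⟨hxA, hcx⟩ := mem_filter.1 hx
    exact (compl_adj _ _ _).2 ⟨(ne_of_mem_erase hxA).symm, hcx⟩

theorem exists_isNClique_or_isNClique_compl_or_isTypedSeq (τ : ℕ → Prop) (p q k : ℕ)
    (A : Finset V) (hA : (p + q) ^ k ≤ #A) :
    (∃ s ⊆ A, G.IsNClique p s) ∨ (∃ s ⊆ A, Gᶜ.IsNClique q s) ∨
      ∃ e : Fin k → V, (∀ i, e i ∈ A) ∧ G.IsTypedSeq τ e := by
  classical
  induction p generalizing τ q k A with
  | zero => exact .inl ⟨∅, empty_subset _, isNClique_empty.2 rfl⟩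
  | succ p ihp =>
  induction q generalizing τ k A with
  | zero => exact .inr (.inl ⟨∅, empty_subset _, isNClique_empty.2 rfl⟩)
  | succ q ihq =>
  cases k with
  | zero => exact .inr (.inr ⟨Fin.elim0, fun i => i.elim0, fun i => i.elim0⟩)
  | succ k =>
  obtain ⟨c, hc⟩ : A.Nonempty := card_pos.1 (lt_of_lt_of_le (by positivity) hA)
  obtain ⟨N, hNA, M, hMA, hNM, hcN, hcM⟩ := G.exists_adj_compl_adj_split hc
  have hsplit : (p + q + 1) ^ k + (p + q + 1) ^ (k + 1) < #N + #M + 1 + 1 := by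
    have := pow_add_pow_succ_le_succ_pow (p + q + 1) k
    rw [show p + 1 + (q + 1) = p + q + 1 + 1 by ring] at hA
    omega
  have hpN : p + (q + 1) = p + q + 1 := by ring
  have hqM : p + 1 + q = p + q + 1 := by ring
  by_cases hτ : τ 0
  · obtain hN | hM : (p + q + 1) ^ k ≤ #N ∨ (p + q + 1) ^ (k + 1) ≤ #M := by omega
    · obtain h | h | ⟨e, heN, he⟩ := ihp (fun n => τ (n + 1)) (q + 1) k N (hpN ▸ hN)
      · exact .inl (exists_isNClique_insert hc hNA hcN h)
      · exact .inr (.inl (h.imp fun s ⟨hs, h⟩ => ⟨hs.trans hNA, h⟩))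
      · exact .inr (.inr ⟨Fin.cons c e, Fin.cases hc (hNA <| heN ·),
          he.cons fun j => iff_of_true (hcN _ (heN j)) hτ⟩)
    · obtain h | h | ⟨e, heM, he⟩ := ihq τ (k + 1) M (hqM ▸ hM)
      · exact .inl (h.imp fun s ⟨hs, h⟩ => ⟨hs.trans hMA, h⟩)
      · exact .inr (.inl (exists_isNClique_insert hc hMA hcM h))
      · exact .inr (.inr ⟨e, (hMA <| heM ·), he⟩)
  · obtain hN | hM : (p + q + 1) ^ (k + 1) ≤ #N ∨ (p + q + 1) ^ k ≤ #M := by omega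
    · obtain h | h | ⟨e, heN, he⟩ := ihp τ (q + 1) (k + 1) N (hpN ▸ hN)
      · exact .inl (exists_isNClique_insert hc hNA hcN h)
      · exact .inr (.inl (h.imp fun s ⟨hs, h⟩ => ⟨hs.trans hNA, h⟩))
      · exact .inr (.inr ⟨e, (hNA <| heN ·), he⟩)
    · obtain h | h | ⟨e, heM, he⟩ := ihq (fun n => τ (n + 1)) k M (hqM ▸ hM)
      · exact .inl (h.imp fun s ⟨hs, h⟩ => ⟨hs.trans hMA, h⟩)
      · exact .inr (.inl (exists_isNClique_insert hc hMA hcM h))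
      · exact .inr (.inr ⟨Fin.cons c e, Fin.cases hc (hMA <| heM ·),
          he.cons fun j => iff_of_false ((compl_adj _ _ _).1 (hcM _ (heM j))).2 hτ⟩)

lemma exists_isClique_or_isIndepSet_ncard_eq_min [Fintype V] (G : SimpleGraph V) :
    ∃ A : Set V, (G.IsClique A ∨ G.IsIndepSet A) ∧ A.ncard = min (Fintype.card V) 2 := by
  rcases le_or_gt (Fintype.card V) 1 with h | h
  · have : Subsingleton V := Fintype.card_le_one_iff_subsingleton.1 h
    refine ⟨Set.univ, .inl (Set.subsingleton_univ.pairwise _), ?_⟩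
    rw [Set.ncard_univ, Nat.card_eq_fintype_card]
    omega
  · obtain ⟨x, y, hxy⟩ := Fintype.exists_pair_of_one_lt_card h
    refine ⟨{x, y}, ?_, by rw [Set.ncard_pair hxy]; omega⟩
    by_cases hadj : G.Adj x y
    · exact .inl (isClique_pair.2 fun _ => hadj)
    · exact .inr (G.isClique_compl.1 (isClique_pair.2 fun _ => (compl_adj _ _ _).2 ⟨hxy, hadj⟩))

end SimpleGraph

/-- **Erdős–Hajnal for stable graphs.**
For every `m ∈ ℕ` there is a constant `δ = δ(m) > 0` such that every finite graph
`G = (V, E)` without the `m`-order property contains either a clique or an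
anticlique of size at least `|V| ^ δ`. -/
theorem erdos_hajnal_stable (m : ℕ) :
    ∃ δ : ℝ, 0 < δ ∧
      ∀ (V : Type) [Fintype V] (G : SimpleGraph V),
        (¬ ∃ a b : Fin m → V, ∀ i j, G.Adj (a i) (b j) ↔ i ≤ j) →
        ∃ A : Set V,
          ((A.Pairwise fun x y => G.Adj x y) ∨ (A.Pairwise fun x y => ¬ G.Adj x y)) ∧
          (Fintype.card V : ℝ) ^ δ ≤ (A.ncard : ℝ) := by
  refine ⟨((6 * (m + 1) : ℕ) : ℝ)⁻¹, by positivity, fun V _ G hG => ?_⟩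
  set n := Fintype.card V
  set x := (n : ℝ) ^ ((6 * (m + 1) : ℕ) : ℝ)⁻¹
  rcases le_or_gt x 2 with hx | hx
  · obtain ⟨A, hA, hcard⟩ := G.exists_isClique_or_isIndepSet_ncard_eq_min
    have hxn : x ≤ n := by
      rcases Nat.eq_zero_or_pos n with hn | hn
      · simp only [x, hn, Nat.cast_zero]
        exact (Real.zero_rpow (by positivity)).le
      · exact Real.rpow_le_self_of_one_le (by exact_mod_cast hn)
          (inv_le_one_of_one_le₀ (by norm_cast; omega))
    refine ⟨A, hA, ?_⟩
    rw [hcard, Nat.cast_min]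
    exact le_min hxn (by exact_mod_cast hx)
  · have hn : (⌈x⌉₊ + ⌈x⌉₊) ^ (2 * m) ≤ #(univ : Finset V) := by
      rw [card_univ]
      exact_mod_cast (natCast_add_ceil_pow_le hx m).trans
        (Real.rpow_inv_natCast_pow n.cast_nonneg (by positivity)).le
    obtain ⟨s, -, hs⟩ | ⟨s, -, hs⟩ | ⟨e, -, he⟩ :=
      G.exists_isNClique_or_isNClique_compl_or_isTypedSeq Even _ _ _ univ hn
    · exact ⟨s, .inl hs.isClique, by rw [Set.ncard_coe_finset, hs.card_eq]; exact Nat.le_ceil x⟩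
    · exact ⟨s, .inr (G.isClique_compl.1 hs.isClique),
        by rw [Set.ncard_coe_finset, hs.card_eq]; exact Nat.le_ceil x⟩
    · exact absurd (G.exists_order_of_isTypedSeq_even he) hG
end
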